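/- arXiv:1703.10283 — 3 statements merged into one kernel-verified Lean document; each statement's English description precedes it below -/
import Mathlib

section
/- Let g : ℝ → [0,∞) be a probability density with g(−s) = g(s) for all s ∈ ℝ. Then d_g(X, −X) = d_g(X, X) and d_g(−X, −X) = d_g(X, X). In particular, if d_g(X,X) > 0 then the distance correlation satisfies R_g(X,−X) = d_g(X,−X)/√(d_g(X,X) d_g(−X,−X)) = 1, even though X and −X need not be equal almost surely; thus R_g(X,Y) = 1 does not imply X = Y a.s. -/
open MeasureTheory
open scoped unitInterval ENNReal

lemma auxPiProd {n : ℕ} {f : ℝ → ℝ≥0∞} (hf : Measurable f) :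
    ∫⁻ t : Fin n → ℝ, ∏ j, f (t j) = (∫⁻ x, f x) ^ n := by
  induction n with
  | zero =>
      have h : (fun t : Fin 0 → ℝ => ∏ j, f (t j)) = fun _ => (1 : ℝ≥0∞) := by
        funext t; simp
      rw [h, lintegral_const, one_mul, pow_zero]
      rw [MeasureTheory.volume_pi, Measure.pi_univ]
      simp
  | succ n ih =>
      have hmp := (MeasureTheory.measurePreserving_piFinSuccAbove
        (fun _ : Fin (n + 1) => (volume : Measure ℝ)) 0).symm
      have hemb : MeasurableEmbedding
          ((MeasurableEquiv.piFinSuccAbove (fun _ : Fin (n + 1) => ℝ) 0).symm) :=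
        (MeasurableEquiv.piFinSuccAbove (fun _ : Fin (n + 1) => ℝ) 0).symm.measurableEmbedding
      have h1 := hmp.lintegral_comp_emb hemb (fun t : Fin (n + 1) → ℝ => ∏ j, f (t j))
      have h2 : ∀ p : ℝ × (Fin n → ℝ),
          (∏ j, f ((MeasurableEquiv.piFinSuccAbove (fun _ : Fin (n + 1) => ℝ) 0).symm p j))
            = f p.1 * ∏ j, f (p.2 j) := by
        intro p
        have : ∀ j, ((MeasurableEquiv.piFinSuccAbove (fun _ : Fin (n + 1) => ℝ) 0).symm p) j
            = (Fin.insertNth (α := fun _ => ℝ) 0 p.1 p.2) j := by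
          intro j; rfl
        rw [Fin.prod_univ_succAbove (fun j =>
          f ((MeasurableEquiv.piFinSuccAbove (fun _ : Fin (n + 1) => ℝ) 0).symm p j)) 0]
        simp only [this, Fin.insertNth_apply_same, Fin.insertNth_apply_succAbove]
      rw [MeasureTheory.volume_pi, ← h1]
      calc ∫⁻ p : ℝ × (Fin n → ℝ),
            (∏ j, f ((MeasurableEquiv.piFinSuccAbove (fun _ : Fin (n + 1) => ℝ) 0).symm p j))
              ∂((volume : Measure ℝ).prod (Measure.pi fun _ => (volume : Measure ℝ)))
          = ∫⁻ p : ℝ × (Fin n → ℝ), f p.1 * ∏ j, f (p.2 j)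
              ∂((volume : Measure ℝ).prod (Measure.pi fun _ => (volume : Measure ℝ))) :=
            lintegral_congr h2
        _ = (∫⁻ x, f x) * ∫⁻ y : Fin n → ℝ, ∏ j, f (y j)
              ∂(Measure.pi fun _ => (volume : Measure ℝ)) := by
            exact lintegral_prod_mul hf.aemeasurable
              (Finset.measurable_prod Finset.univ fun j _ =>
                hf.comp (measurable_pi_apply j)).aemeasurable
        _ = (∫⁻ x, f x) ^ (n + 1) := by
              rw [← MeasureTheory.volume_pi, ih]; ring

lemma auxNeg {n : ℕ} (F : (Fin n → ℝ) → ℝ≥0∞) :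
    ∫⁻ t : Fin n → ℝ, F (-t) = ∫⁻ t, F t := by
  have hmp := Measure.measurePreserving_neg (volume : Measure (Fin n → ℝ))
  have hemb : MeasurableEmbedding (Neg.neg : (Fin n → ℝ) → (Fin n → ℝ)) :=
    (Homeomorph.neg (Fin n → ℝ)).toMeasurableEquiv.measurableEmbedding
  exact hmp.lintegral_comp_emb hemb F

lemma auxCFnorm {Ω : Type*} [MeasurableSpace Ω] (ℙ : Measure Ω) [IsProbabilityMeasure ℙ]
    (f : Ω → ℝ) : ‖∫ ω, Complex.exp (Complex.I * (f ω : ℂ)) ∂ℙ‖ ≤ 1 := by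
  have h := norm_integral_le_of_norm_le_const (μ := ℙ)
    (f := fun ω => Complex.exp (Complex.I * (f ω : ℂ))) (C := 1)
    (ae_of_all _ fun ω => by
      simp [Complex.norm_exp, Complex.mul_re])
  simpa [measure_univ] using h

/-- The joint characteristic function of the finite-dimensional distribution of the pair
of processes `(X, Y)` at the points `x 0, …, x (k-1)` of `[0,1]`:
`φ_{X,Y}(x; s, t) = E[exp(i Σ_j (s_j X(x_j) + t_j Y(x_j)))]`. -/
noncomputable def jointCF {Ω : Type*} [MeasurableSpace Ω] (ℙ : Measure Ω)
    (X Y : Ω → C(I, ℝ)) {k : ℕ} (x : Fin k → I) (s t : Fin k → ℝ) : ℂ :=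
  ∫ ω, Complex.exp (Complex.I * ((∑ j, (s j * X ω (x j) + t j * Y ω (x j)) : ℝ) : ℂ)) ∂ℙ

/-- The characteristic function of the finite-dimensional distribution of the process `X`
at the points `x 0, …, x (k-1)` of `[0,1]`: `φ_X(x; s) = E[exp(i Σ_j s_j X(x_j))]`. -/
noncomputable def margCF {Ω : Type*} [MeasurableSpace Ω] (ℙ : Measure Ω)
    (X : Ω → C(I, ℝ)) {k : ℕ} (x : Fin k → I) (s : Fin k → ℝ) : ℂ :=
  ∫ ω, Complex.exp (Complex.I * ((∑ j, s j * X ω (x j) : ℝ) : ℂ)) ∂ℙ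

/-- The distance covariance `d_g(X,Y)` of two stochastic processes `X, Y` with continuous
sample paths on `[0,1]`, with weight function `g`:
`d_g(X,Y) = Σ_{k≥1} (e^{-1}/k!) ∫_{[0,1]^k} ∫_{ℝ^{2k}} |φ_{X,Y} - φ_X φ_Y|² Π_j g(s_j)g(t_j) ds dt dx`. -/
noncomputable def distCov {Ω : Type*} [MeasurableSpace Ω] (ℙ : Measure Ω)
    (X Y : Ω → C(I, ℝ)) (g : ℝ → ℝ) : ℝ≥0∞ :=
  ∑' k : ℕ,
    ENNReal.ofReal (Real.exp (-1) / (Nat.factorial (k + 1) : ℝ)) *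
      ∫⁻ (x : Fin (k + 1) → I),
        ∫⁻ (s : Fin (k + 1) → ℝ), ∫⁻ (t : Fin (k + 1) → ℝ),
          ENNReal.ofReal
            (‖jointCF ℙ X Y x s t - margCF ℙ X x s * margCF ℙ Y x t‖ ^ 2 *
              ∏ j, g (s j) * g (t j))



section Main

variable {Ω : Type*} [MeasurableSpace Ω] (ℙ : Measure Ω)

lemma auxJoint1 (X : Ω → C(I, ℝ)) {k : ℕ} (x : Fin k → I) (s t : Fin k → ℝ) :
    jointCF ℙ X (fun ω => -(X ω)) x s t = jointCF ℙ X X x s (-t) := by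
  unfold jointCF
  refine integral_congr_ae (Filter.Eventually.of_forall fun ω => ?_)
  have h : (∑ j, (s j * X ω (x j) + t j * ((fun ω => -(X ω)) ω) (x j)))
      = ∑ j, (s j * X ω (x j) + (-t) j * X ω (x j)) := by
    refine Finset.sum_congr rfl fun j _ => ?_
    simp only [ContinuousMap.neg_apply, Pi.neg_apply]; ring
  simp only [h]

lemma auxJoint2 (X : Ω → C(I, ℝ)) {k : ℕ} (x : Fin k → I) (s t : Fin k → ℝ) :
    jointCF ℙ (fun ω => -(X ω)) (fun ω => -(X ω)) x s t = jointCF ℙ X X x (-s) (-t) := by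
  unfold jointCF
  refine integral_congr_ae (Filter.Eventually.of_forall fun ω => ?_)
  have h : (∑ j, (s j * ((fun ω => -(X ω)) ω) (x j) + t j * ((fun ω => -(X ω)) ω) (x j)))
      = ∑ j, ((-s) j * X ω (x j) + (-t) j * X ω (x j)) := by
    refine Finset.sum_congr rfl fun j _ => ?_
    simp only [ContinuousMap.neg_apply, Pi.neg_apply]; ring
  simp only [h]

lemma auxMarg (X : Ω → C(I, ℝ)) {k : ℕ} (x : Fin k → I) (t : Fin k → ℝ) :
    margCF ℙ (fun ω => -(X ω)) x t = margCF ℙ X x (-t) := by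
  unfold margCF
  refine integral_congr_ae (Filter.Eventually.of_forall fun ω => ?_)
  have h : (∑ j, t j * ((fun ω => -(X ω)) ω) (x j)) = ∑ j, (-t) j * X ω (x j) := by
    refine Finset.sum_congr rfl fun j _ => ?_
    simp only [ContinuousMap.neg_apply, Pi.neg_apply]; ring
  simp only [h]

end Main

/-- For a symmetric probability density `g` on `ℝ`,
`d_g(X,−X) = d_g(X,X)` and `d_g(−X,−X) = d_g(X,X)`; in particular, if `d_g(X,X) > 0`
then the distance correlation `R_g(X,−X) = d_g(X,−X)/√(d_g(X,X) d_g(−X,−X))` equals `1`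
(even though `X` and `−X` need not be equal almost surely; thus `R_g(X,Y) = 1` does not
imply `X = Y` a.s.). -/
theorem distCov_neg_self
    {Ω : Type*} [MeasurableSpace Ω] (ℙ : Measure Ω) [IsProbabilityMeasure ℙ]
    [MeasurableSpace C(I, ℝ)] [BorelSpace C(I, ℝ)]
    (X : Ω → C(I, ℝ)) (hX : Measurable X)
    (g : ℝ → ℝ) (hg : Measurable g) (hg_nonneg : ∀ s, 0 ≤ g s)
    (hg_int : (∫ s, g s) = 1) (hg_symm : ∀ s, g (-s) = g s) :
    distCov ℙ X (fun ω => -(X ω)) g = distCov ℙ X X g ∧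
      distCov ℙ (fun ω => -(X ω)) (fun ω => -(X ω)) g = distCov ℙ X X g ∧
      (0 < distCov ℙ X X g →
        distCov ℙ X (fun ω => -(X ω)) g /
          (distCov ℙ X X g *
            distCov ℙ (fun ω => -(X ω)) (fun ω => -(X ω)) g) ^ (1/2 : ℝ) = 1) := by
  -- the (X,X) integrand
  set F : ∀ k : ℕ, (Fin k → I) → (Fin k → ℝ) → (Fin k → ℝ) → ℝ≥0∞ := fun k x s t =>
    ENNReal.ofReal
      (‖jointCF ℙ X X x s t - margCF ℙ X x s * margCF ℙ X x t‖ ^ 2 *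
        ∏ j, g (s j) * g (t j)) with hF
  have hprod : ∀ {k : ℕ} (s t : Fin k → ℝ),
      (∏ j, g (s j) * g ((-t) j)) = ∏ j, g (s j) * g (t j) :=
    fun s t => Finset.prod_congr rfl fun j _ => by rw [Pi.neg_apply, hg_symm]
  have hprod2 : ∀ {k : ℕ} (s t : Fin k → ℝ),
      (∏ j, g ((-s) j) * g ((-t) j)) = ∏ j, g (s j) * g (t j) :=
    fun s t => Finset.prod_congr rfl fun j _ => by rw [Pi.neg_apply, Pi.neg_apply,
      hg_symm, hg_symm]
  have key1 : distCov ℙ X (fun ω => -(X ω)) g = distCov ℙ X X g := by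
    unfold distCov
    refine tsum_congr fun k => ?_
    congr 1
    refine lintegral_congr fun x => ?_
    refine lintegral_congr fun s => ?_
    rw [← auxNeg (fun t => F (k + 1) x s t)]
    refine lintegral_congr fun t => ?_
    rw [hF]
    simp only
    rw [auxJoint1 ℙ X x s t, auxMarg ℙ X x t, ← hprod s t]
  have key2 : distCov ℙ (fun ω => -(X ω)) (fun ω => -(X ω)) g = distCov ℙ X X g := by
    unfold distCov
    refine tsum_congr fun k => ?_
    congr 1
    refine lintegral_congr fun x => ?_
    rw [← auxNeg (fun s => ∫⁻ t, F (k + 1) x s t)]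
    refine lintegral_congr fun s => ?_
    rw [← auxNeg (fun t => F (k + 1) x (-s) t)]
    refine lintegral_congr fun t => ?_
    rw [hF]
    simp only
    rw [auxJoint2 ℙ X x s t, auxMarg ℙ X x s, auxMarg ℙ X x t, ← hprod2 s t]
  refine ⟨key1, key2, fun hpos => ?_⟩
  -- finiteness of distCov ℙ X X g
  have hgint : Integrable g := by
    by_contra h
    rw [integral_undef h] at hg_int
    norm_num at hg_int
  have hG1 : (∫⁻ r, ENNReal.ofReal (g r)) = 1 := by
    rw [← ofReal_integral_eq_lintegral_ofReal hgint (Filter.Eventually.of_forall hg_nonneg),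
      hg_int, ENNReal.ofReal_one]
  have hnorm : ∀ {k : ℕ} (x : Fin k → I) (s t : Fin k → ℝ),
      ‖jointCF ℙ X X x s t - margCF ℙ X x s * margCF ℙ X x t‖ ≤ 2 := by
    intro k x s t
    have h1 : ‖jointCF ℙ X X x s t‖ ≤ 1 := auxCFnorm ℙ _
    have h2 : ‖margCF ℙ X x s‖ ≤ 1 := auxCFnorm ℙ _
    have h3 : ‖margCF ℙ X x t‖ ≤ 1 := auxCFnorm ℙ _
    calc ‖jointCF ℙ X X x s t - margCF ℙ X x s * margCF ℙ X x t‖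
        ≤ ‖jointCF ℙ X X x s t‖ + ‖margCF ℙ X x s * margCF ℙ X x t‖ := norm_sub_le _ _
      _ ≤ 2 := by
          rw [norm_mul]
          nlinarith [norm_nonneg (margCF ℙ X x s), norm_nonneg (margCF ℙ X x t)]
  have hterm : ∀ k : ℕ,
      (∫⁻ (x : Fin (k + 1) → I), ∫⁻ (s : Fin (k + 1) → ℝ), ∫⁻ (t : Fin (k + 1) → ℝ),
        F (k + 1) x s t) ≤ 4 := by
    intro k
    have hb : ∀ (x : Fin (k + 1) → I) (s t : Fin (k + 1) → ℝ),
        F (k + 1) x s t ≤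
          4 * ((∏ j, ENNReal.ofReal (g (s j))) * ∏ j, ENNReal.ofReal (g (t j))) := by
      intro x s t
      have hP : (0:ℝ) ≤ ∏ j, g (s j) * g (t j) :=
        Finset.prod_nonneg fun j _ => mul_nonneg (hg_nonneg _) (hg_nonneg _)
      have hD : ‖jointCF ℙ X X x s t - margCF ℙ X x s * margCF ℙ X x t‖ ^ 2 ≤ 4 := by
        nlinarith [hnorm x s t, norm_nonneg (jointCF ℙ X X x s t -
          margCF ℙ X x s * margCF ℙ X x t)]
      calc F (k + 1) x s t
          ≤ ENNReal.ofReal (4 * ∏ j, g (s j) * g (t j)) := by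
            rw [hF]; exact ENNReal.ofReal_le_ofReal
              (mul_le_mul_of_nonneg_right hD hP)
        _ = 4 * ((∏ j, ENNReal.ofReal (g (s j))) * ∏ j, ENNReal.ofReal (g (t j))) := by
            rw [ENNReal.ofReal_mul (by norm_num),
              ENNReal.ofReal_prod_of_nonneg
                (fun j _ => mul_nonneg (hg_nonneg _) (hg_nonneg _))]
            have : ∀ j : Fin (k + 1), ENNReal.ofReal (g (s j) * g (t j)) =
                ENNReal.ofReal (g (s j)) * ENNReal.ofReal (g (t j)) :=
              fun j => ENNReal.ofReal_mul (hg_nonneg _)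
            rw [Finset.prod_congr rfl fun j _ => this j, Finset.prod_mul_distrib]
            norm_num
    have hGm : Measurable fun r => ENNReal.ofReal (g r) := hg.ennreal_ofReal
    calc (∫⁻ (x : Fin (k + 1) → I), ∫⁻ s, ∫⁻ t, F (k + 1) x s t)
        ≤ ∫⁻ (x : Fin (k + 1) → I), ∫⁻ (s : Fin (k + 1) → ℝ), ∫⁻ (t : Fin (k + 1) → ℝ),
            4 * ((∏ j, ENNReal.ofReal (g (s j))) * ∏ j, ENNReal.ofReal (g (t j))) :=
          lintegral_mono fun x => lintegral_mono fun s => lintegral_mono fun t => hb x s t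
      _ = ∫⁻ (x : Fin (k + 1) → I), ∫⁻ (s : Fin (k + 1) → ℝ),
            4 * ∏ j, ENNReal.ofReal (g (s j)) := by
          refine lintegral_congr fun x => lintegral_congr fun s => ?_
          rw [show (fun t : Fin (k + 1) → ℝ =>
              4 * ((∏ j, ENNReal.ofReal (g (s j))) * ∏ j, ENNReal.ofReal (g (t j))))
            = fun t : Fin (k + 1) → ℝ =>
              (4 * ∏ j, ENNReal.ofReal (g (s j))) * ∏ j, ENNReal.ofReal (g (t j))
            from funext fun t => by ring]
          rw [lintegral_const_mul' _ _ (ENNReal.mul_ne_top (by norm_num)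
            (ENNReal.prod_ne_top fun j _ => ENNReal.ofReal_ne_top))]
          rw [auxPiProd hGm, hG1, one_pow, mul_one]
      _ = ∫⁻ (_ : Fin (k + 1) → I), (4 : ℝ≥0∞) := by
          refine lintegral_congr fun x => ?_
          rw [lintegral_const_mul' _ _ (by norm_num), auxPiProd hGm, hG1, one_pow, mul_one]
      _ = 4 := by rw [lintegral_const, measure_univ, mul_one]
  have hsum : Summable (fun k : ℕ => Real.exp (-1) / ((Nat.factorial (k + 1) : ℝ))) := by
    have h0 : Summable (fun n : ℕ => 1 / (Nat.factorial n : ℝ)) := by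
      simpa using Real.summable_pow_div_factorial 1
    have h1 : Summable (fun k : ℕ => 1 / (Nat.factorial (k + 1) : ℝ)) :=
      (summable_nat_add_iff 1).mpr h0
    refine (h1.mul_left (Real.exp (-1))).congr fun k => ?_
    rw [mul_one_div]
  have hfin : distCov ℙ X X g ≠ ⊤ := by
    have hle : distCov ℙ X X g ≤
        ∑' k : ℕ, ENNReal.ofReal (Real.exp (-1) / ((Nat.factorial (k + 1) : ℝ))) * 4 := by
      unfold distCov
      exact ENNReal.tsum_le_tsum fun k => mul_le_mul_right (hterm k) _
    have heq : (∑' k : ℕ, ENNReal.ofReal (Real.exp (-1) / ((Nat.factorial (k + 1) : ℝ))) * 4)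
        = ENNReal.ofReal (∑' k : ℕ, Real.exp (-1) / ((Nat.factorial (k + 1) : ℝ))) * 4 := by
      rw [ENNReal.tsum_mul_right, ENNReal.ofReal_tsum_of_nonneg (fun k => by positivity) hsum]
    refine ne_top_of_le_ne_top ?_ hle
    rw [heq]
    exact ENNReal.mul_ne_top ENNReal.ofReal_ne_top (by norm_num)
  rw [key1, key2]
  have h2 : (distCov ℙ X X g * distCov ℙ X X g) ^ (1/2 : ℝ) = distCov ℙ X X g := by
    rw [← sq, ← ENNReal.rpow_natCast _ 2, ← ENNReal.rpow_mul]
    norm_num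
  rw [h2]
  exact ENNReal.div_self (ne_of_gt hpos) hfin
end

section
/- Let k ≥ 1 and let w : ℝ → [0,∞) be an integrable measurable function with w(−s) = w(s) for all s. Let U, V be random vectors in ℝ^k on a common probability space, let (U',V') be an independent copy of (U,V), and let V'' be an independent copy of V with (U,V), (U',V'), V'' mutually independent. Then ∫_{ℝ^k}∫_{ℝ^k} |φ_{U,V}(s,t) − φ_U(s)φ_V(t)|² ∏_{j=1}^k w(s_j)w(t_j) ds dt = ∫_{ℝ^k}∫_{ℝ^k} ( E[cos⟨s, U−U'⟩ cos⟨t, V−V'⟩] + E[cos⟨s, U−U'⟩] · E[cos⟨t, V−V'⟩] − 2 E[cos⟨s, U−U'⟩ cos⟨t, V−V''⟩] ) ∏_{j=1}^k w(s_j)w(t_j) ds dt. -/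
open MeasureTheory
open MeasureTheory Complex

noncomputable def eI (r : ℝ) : ℂ := Complex.exp (Complex.I * r)

lemma eI_mul (r r' : ℝ) : eI r * eI r' = eI (r + r') := by
  rw [eI, eI, eI, ← Complex.exp_add]; congr 1; push_cast; ring

lemma conj_eI (r : ℝ) : (starRingEnd ℂ) (eI r) = eI (-r) := by
  rw [eI, eI, ← Complex.exp_conj]; congr 1; simp

lemma eI_re (r : ℝ) : (eI r).re = Real.cos r := by
  rw [eI, mul_comm]; exact Complex.exp_ofReal_mul_I_re r

lemma measurable_eI : Measurable eI :=
  Complex.measurable_exp.comp (measurable_const.mul Complex.measurable_ofReal)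

lemma norm_eI (r : ℝ) : ‖eI r‖ = 1 := by
  simp [eI, mul_comm Complex.I, Complex.norm_exp_ofReal_mul_I]

lemma intg_eI {α : Type*} [MeasurableSpace α] {μ : Measure α} [IsFiniteMeasure μ]
    {f : α → ℝ} (hf : Measurable f) : Integrable (fun a => eI (f a)) μ := by
  refine (integrable_const (1:ℝ)).mono' (measurable_eI.comp hf).aestronglyMeasurable ?_
  exact Filter.Eventually.of_forall fun a => le_of_eq (norm_eI _)

lemma intg_bdd {α : Type*} [MeasurableSpace α] {μ : Measure α} [IsFiniteMeasure μ]
    {f : α → ℝ} (hf : Measurable f) {C : ℝ} (hC : ∀ a, |f a| ≤ C) : Integrable f μ :=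
  (integrable_const C).mono' hf.aestronglyMeasurable
    (Filter.Eventually.of_forall fun a => by simpa [Real.norm_eq_abs] using hC a)

lemma intg_one_bdd_mul {α : Type*} [MeasurableSpace α] {μ : Measure α} [IsFiniteMeasure μ]
    {f g : α → ℝ} (hf : Measurable f) (hg : Measurable g)
    (h1 : ∀ a, |f a| ≤ 1) (h2 : ∀ a, |g a| ≤ 1) :
    Integrable (fun a => f a * g a) μ :=
  intg_bdd (hf.mul hg) (C := 1) fun a => by
    calc |f a * g a| = |f a| * |g a| := abs_mul _ _
      _ ≤ 1 * 1 := mul_le_mul (h1 a) (h2 a) (abs_nonneg _) zero_le_one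
      _ = 1 := one_mul 1

lemma intg_cos_mul_cos {α : Type*} [MeasurableSpace α] {μ : Measure α} [IsFiniteMeasure μ]
    {f g : α → ℝ} (hf : Measurable f) (hg : Measurable g) :
    Integrable (fun a => Real.cos (f a) * Real.cos (g a)) μ :=
  intg_one_bdd_mul (Real.measurable_cos.comp hf) (Real.measurable_cos.comp hg)
    (fun a => Real.abs_cos_le_one _) (fun a => Real.abs_cos_le_one _)

lemma intg_sin_mul_sin {α : Type*} [MeasurableSpace α] {μ : Measure α} [IsFiniteMeasure μ]
    {f g : α → ℝ} (hf : Measurable f) (hg : Measurable g) :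
    Integrable (fun a => Real.sin (f a) * Real.sin (g a)) μ :=
  intg_one_bdd_mul (Real.measurable_sin.comp hf) (Real.measurable_sin.comp hg)
    (fun a => Real.abs_sin_le_one _) (fun a => Real.abs_sin_le_one _)

lemma int_eI_mul {α β : Type*} [MeasurableSpace α] [MeasurableSpace β]
    (μ : Measure α) (ν : Measure β) [SFinite μ] [SFinite ν]
    (f : α → ℝ) (g : β → ℝ) :
    (∫ a, eI (f a) ∂μ) * (∫ b, eI (g b) ∂ν) = ∫ p : α × β, eI (f p.1 + g p.2) ∂μ.prod ν := by
  rw [← integral_prod_mul]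
  exact integral_congr_ae (Filter.Eventually.of_forall fun p => eI_mul _ _)

lemma conj_int_eI {α : Type*} [MeasurableSpace α] (μ : Measure α) (f : α → ℝ) :
    (starRingEnd ℂ) (∫ a, eI (f a) ∂μ) = ∫ a, eI (-(f a)) ∂μ := by
  rw [← integral_conj]
  exact integral_congr_ae (Filter.Eventually.of_forall fun a => conj_eI _)

lemma re_int_eI {α : Type*} [MeasurableSpace α] (μ : Measure α) [IsFiniteMeasure μ]
    {f : α → ℝ} (hf : Measurable f) :
    (∫ a, eI (f a) ∂μ).re = ∫ a, Real.cos (f a) ∂μ := by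
  have h := integral_re (μ := μ) (f := fun a => eI (f a)) (intg_eI hf)
  simp only [RCLike.re_to_complex] at h
  rw [← h]
  exact integral_congr_ae (Filter.Eventually.of_forall fun a => eI_re _)

lemma norm_sq_expand (a b c : ℂ) :
    ‖a - b * c‖ ^ 2 =
      (a * (starRingEnd ℂ) a).re + ((b * (starRingEnd ℂ) b) * (c * (starRingEnd ℂ) c)).re
        - 2 * (a * ((starRingEnd ℂ) b * (starRingEnd ℂ) c)).re := by
  have h0 : ∀ z : ℂ, ‖z‖ ^ 2 = (z * (starRingEnd ℂ) z).re := fun z => by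
    rw [Complex.mul_conj, Complex.ofReal_re, Complex.sq_norm]
  rw [h0]
  have h1 : (a - b * c) * (starRingEnd ℂ) (a - b * c)
      = (a * (starRingEnd ℂ) a + (b * (starRingEnd ℂ) b) * (c * (starRingEnd ℂ) c))
        - (a * ((starRingEnd ℂ) b * (starRingEnd ℂ) c) + b * c * (starRingEnd ℂ) a) := by
    rw [map_sub, map_mul]; ring
  rw [h1, Complex.sub_re, Complex.add_re, Complex.add_re]
  have h2 : (b * c * (starRingEnd ℂ) a).re = (a * ((starRingEnd ℂ) b * (starRingEnd ℂ) c)).re := by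
    rw [← Complex.conj_re (b * c * (starRingEnd ℂ) a)]
    congr 1
    rw [map_mul, map_mul, Complex.conj_conj]
    ring
  rw [h2]; ring

lemma self_mul_conj_int_eI {Ω : Type*} [MeasurableSpace Ω] (ℙ : Measure Ω)
    [IsProbabilityMeasure ℙ] {f : Ω → ℝ} (hf : Measurable f) :
    (∫ ω, eI (f ω) ∂ℙ) * (starRingEnd ℂ) (∫ ω, eI (f ω) ∂ℙ)
      = ((∫ p : Ω × Ω, Real.cos (f p.1 - f p.2) ∂ℙ.prod ℙ : ℝ) : ℂ) := by
  have hre : ((∫ ω, eI (f ω) ∂ℙ) * (starRingEnd ℂ) (∫ ω, eI (f ω) ∂ℙ)).re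
      = ∫ p : Ω × Ω, Real.cos (f p.1 - f p.2) ∂ℙ.prod ℙ := by
    rw [conj_int_eI, int_eI_mul,
      re_int_eI (ℙ.prod ℙ) (f := fun p : Ω × Ω => f p.1 + -f p.2) (by fun_prop)]
    exact integral_congr_ae (Filter.Eventually.of_forall fun p => by
      simp only [sub_eq_add_neg])
  rw [Complex.mul_conj] at hre ⊢
  rw [← hre]
  simp

lemma point_identity {Ω : Type*} [MeasurableSpace Ω] (ℙ : Measure Ω) [IsProbabilityMeasure ℙ]
    (x y : Ω → ℝ) (hx : Measurable x) (hy : Measurable y) :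
    ‖(∫ ω, eI (x ω + y ω) ∂ℙ) - (∫ ω, eI (x ω) ∂ℙ) * (∫ ω, eI (y ω) ∂ℙ)‖ ^ 2
    = ((∫ p : Ω × Ω, Real.cos (x p.1 - x p.2) * Real.cos (y p.1 - y p.2) ∂ℙ.prod ℙ)
      + (∫ p : Ω × Ω, Real.cos (x p.1 - x p.2) ∂ℙ.prod ℙ) *
          (∫ p : Ω × Ω, Real.cos (y p.1 - y p.2) ∂ℙ.prod ℙ)
      - 2 * ∫ p : Ω × Ω × Ω, Real.cos (x p.1 - x p.2.1) * Real.cos (y p.1 - y p.2.2)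
            ∂ℙ.prod (ℙ.prod ℙ))
    + (2 * (∫ p : Ω × Ω × Ω, Real.sin (x p.1 - x p.2.1) * Real.sin (y p.1 - y p.2.2)
            ∂ℙ.prod (ℙ.prod ℙ))
      - ∫ p : Ω × Ω, Real.sin (x p.1 - x p.2) * Real.sin (y p.1 - y p.2) ∂ℙ.prod ℙ) := by
  have hx1 : Measurable fun p : Ω × Ω => x p.1 - x p.2 :=
    (hx.comp measurable_fst).sub (hx.comp measurable_snd)
  have hy1 : Measurable fun p : Ω × Ω => y p.1 - y p.2 :=
    (hy.comp measurable_fst).sub (hy.comp measurable_snd)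
  have hx3 : Measurable fun p : Ω × Ω × Ω => x p.1 - x p.2.1 :=
    (hx.comp measurable_fst).sub (hx.comp (measurable_fst.comp measurable_snd))
  have hy3 : Measurable fun p : Ω × Ω × Ω => y p.1 - y p.2.2 :=
    (hy.comp measurable_fst).sub (hy.comp (measurable_snd.comp measurable_snd))
  rw [norm_sq_expand]
  -- term 1
  have t1 : ((∫ ω, eI (x ω + y ω) ∂ℙ) * (starRingEnd ℂ) (∫ ω, eI (x ω + y ω) ∂ℙ)).re
      = (∫ p : Ω × Ω, Real.cos (x p.1 - x p.2) * Real.cos (y p.1 - y p.2) ∂ℙ.prod ℙ)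
        - ∫ p : Ω × Ω, Real.sin (x p.1 - x p.2) * Real.sin (y p.1 - y p.2) ∂ℙ.prod ℙ := by
    rw [conj_int_eI, int_eI_mul,
      re_int_eI (ℙ.prod ℙ) (f := fun p : Ω × Ω => (x p.1 + y p.1) + -(x p.2 + y p.2))
        (by fun_prop)]
    have hcong : ∀ p : Ω × Ω, Real.cos (x p.1 + y p.1 + -(x p.2 + y p.2))
        = Real.cos (x p.1 - x p.2) * Real.cos (y p.1 - y p.2)
          - Real.sin (x p.1 - x p.2) * Real.sin (y p.1 - y p.2) := fun p => by
      rw [show x p.1 + y p.1 + -(x p.2 + y p.2) = (x p.1 - x p.2) + (y p.1 - y p.2) by ring,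
        Real.cos_add]
    rw [integral_congr_ae (Filter.Eventually.of_forall hcong)]
    exact integral_sub (intg_cos_mul_cos hx1 hy1) (intg_sin_mul_sin hx1 hy1)
  -- term 2
  have t2 : (((∫ ω, eI (x ω) ∂ℙ) * (starRingEnd ℂ) (∫ ω, eI (x ω) ∂ℙ)) *
        ((∫ ω, eI (y ω) ∂ℙ) * (starRingEnd ℂ) (∫ ω, eI (y ω) ∂ℙ))).re
      = (∫ p : Ω × Ω, Real.cos (x p.1 - x p.2) ∂ℙ.prod ℙ) *
          (∫ p : Ω × Ω, Real.cos (y p.1 - y p.2) ∂ℙ.prod ℙ) := by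
    rw [self_mul_conj_int_eI ℙ hx, self_mul_conj_int_eI ℙ hy, ← Complex.ofReal_mul,
      Complex.ofReal_re]
  -- term 3
  have t3 : ((∫ ω, eI (x ω + y ω) ∂ℙ) *
        ((starRingEnd ℂ) (∫ ω, eI (x ω) ∂ℙ) * (starRingEnd ℂ) (∫ ω, eI (y ω) ∂ℙ))).re
      = (∫ p : Ω × Ω × Ω, Real.cos (x p.1 - x p.2.1) * Real.cos (y p.1 - y p.2.2)
            ∂ℙ.prod (ℙ.prod ℙ))
        - ∫ p : Ω × Ω × Ω, Real.sin (x p.1 - x p.2.1) * Real.sin (y p.1 - y p.2.2)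
            ∂ℙ.prod (ℙ.prod ℙ) := by
    rw [conj_int_eI, conj_int_eI, int_eI_mul,
      int_eI_mul ℙ (ℙ.prod ℙ) (fun ω => x ω + y ω) (fun p : Ω × Ω => -(x p.1) + -(y p.2)),
      re_int_eI (ℙ.prod (ℙ.prod ℙ))
        (f := fun p : Ω × Ω × Ω => (x p.1 + y p.1) + (-(x p.2.1) + -(y p.2.2)))
        (by fun_prop)]
    have hcong : ∀ p : Ω × Ω × Ω, Real.cos (x p.1 + y p.1 + (-(x p.2.1) + -(y p.2.2)))
        = Real.cos (x p.1 - x p.2.1) * Real.cos (y p.1 - y p.2.2)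
          - Real.sin (x p.1 - x p.2.1) * Real.sin (y p.1 - y p.2.2) := fun p => by
      rw [show x p.1 + y p.1 + (-(x p.2.1) + -(y p.2.2))
          = (x p.1 - x p.2.1) + (y p.1 - y p.2.2) by ring, Real.cos_add]
    rw [integral_congr_ae (Filter.Eventually.of_forall hcong)]
    exact integral_sub (intg_cos_mul_cos hx3 hy3) (intg_sin_mul_sin hx3 hy3)
  rw [t1, t2, t3]
  ring

lemma abs_int_le_one {α : Type*} [MeasurableSpace α] (μ : Measure α) [IsProbabilityMeasure μ]
    {f : α → ℝ} (h : ∀ a, |f a| ≤ 1) : |∫ a, f a ∂μ| ≤ 1 := by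
  have h2 := norm_integral_le_of_norm_le_const (μ := μ) (f := f) (C := 1)
    (Filter.Eventually.of_forall fun a => by simpa [Real.norm_eq_abs] using h a)
  simpa [Real.norm_eq_abs, measure_univ] using h2

lemma main_aux {k : ℕ} (F G R : (Fin k → ℝ) → (Fin k → ℝ) → ℝ)
    (Ws : (Fin k → ℝ) → ℝ)
    (hWs_meas : Measurable Ws) (hWs_int : Integrable Ws)
    (hWs_nonneg : ∀ s, 0 ≤ Ws s) (hWs_neg : ∀ s, Ws (-s) = Ws s)
    (hG_meas : StronglyMeasurable (fun q : (Fin k → ℝ) × (Fin k → ℝ) => G q.1 q.2))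
    (hR_meas : StronglyMeasurable (fun q : (Fin k → ℝ) × (Fin k → ℝ) => R q.1 q.2))
    (hG_bdd : ∀ s t, |G s t| ≤ 4) (hR_bdd : ∀ s t, |R s t| ≤ 3)
    (hR_odd : ∀ s t, R (-s) t = - R s t)
    (hF : ∀ s t, F s t = G s t + R s t) :
    ∫ s, ∫ t, F s t * (Ws s * Ws t) = ∫ s, ∫ t, G s t * (Ws s * Ws t) := by
  -- pointwise bounds
  have key_bdd : ∀ (H : (Fin k → ℝ) → (Fin k → ℝ) → ℝ) (C : ℝ), (∀ s t, |H s t| ≤ C) →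
      ∀ s t, ‖H s t * (Ws s * Ws t)‖ ≤ C * Ws s * Ws t := by
    intro H C hC s t
    rw [Real.norm_eq_abs, abs_mul,
      _root_.abs_of_nonneg (mul_nonneg (hWs_nonneg s) (hWs_nonneg t))]
    calc |H s t| * (Ws s * Ws t) ≤ C * (Ws s * Ws t) :=
          mul_le_mul_of_nonneg_right (hC s t) (mul_nonneg (hWs_nonneg s) (hWs_nonneg t))
      _ = C * Ws s * Ws t := by ring
  -- inner integrability (fixed s)
  have inner_int : ∀ (H : (Fin k → ℝ) → (Fin k → ℝ) → ℝ) (C : ℝ),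
      StronglyMeasurable (fun q : (Fin k → ℝ) × (Fin k → ℝ) => H q.1 q.2) →
      (∀ s t, |H s t| ≤ C) → ∀ s, Integrable (fun t => H s t * (Ws s * Ws t)) := by
    intro H C hm hC s
    refine (hWs_int.const_mul (C * Ws s)).mono' ?_ ?_
    · exact ((hm.measurable.comp (measurable_const.prodMk measurable_id)).mul
        (measurable_const.mul hWs_meas)).aestronglyMeasurable
    · refine Filter.Eventually.of_forall fun t => ?_
      calc ‖H s t * (Ws s * Ws t)‖ ≤ C * Ws s * Ws t := key_bdd H C hC s t
        _ = C * Ws s * Ws t := rfl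
  have hGW_int := inner_int G 4 hG_meas hG_bdd
  have hRW_int := inner_int R 3 hR_meas hR_bdd
  -- outer integrability
  set IW := ∫ t, Ws t with hIW
  have outer_int : ∀ (H : (Fin k → ℝ) → (Fin k → ℝ) → ℝ) (C : ℝ), 0 ≤ C →
      StronglyMeasurable (fun q : (Fin k → ℝ) × (Fin k → ℝ) => H q.1 q.2) →
      (∀ s t, |H s t| ≤ C) → Integrable (fun s => ∫ t, H s t * (Ws s * Ws t)) := by
    intro H C hCpos hm hC
    refine ((hWs_int.const_mul (C * IW))).mono' ?_ ?_
    · exact (hm.measurable.mul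
        ((hWs_meas.comp measurable_fst).mul
          (hWs_meas.comp measurable_snd))).stronglyMeasurable.integral_prod_right'.aestronglyMeasurable
    · refine Filter.Eventually.of_forall fun s => ?_
      calc ‖∫ t, H s t * (Ws s * Ws t)‖
          ≤ ∫ t, (C * Ws s) * Ws t := by
            refine norm_integral_le_of_norm_le (hWs_int.const_mul (C * Ws s))
              (Filter.Eventually.of_forall fun t => ?_)
            calc ‖H s t * (Ws s * Ws t)‖ ≤ C * Ws s * Ws t := key_bdd H C hC s t
              _ = C * Ws s * Ws t := rfl
        _ = C * IW * Ws s := by rw [integral_const_mul]; ring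
  have hIG := outer_int G 4 (by norm_num) hG_meas hG_bdd
  have hIR := outer_int R 3 (by norm_num) hR_meas hR_bdd
  -- the odd part integrates to zero
  have zeroR : ∫ s, (∫ t, R s t * (Ws s * Ws t)) = 0 := by
    set B := fun s => ∫ t, R s t * (Ws s * Ws t) with hB
    have hodd : ∀ s, B (-s) = - B s := by
      intro s
      rw [hB]
      simp only
      rw [← integral_neg]
      refine integral_congr_ae (Filter.Eventually.of_forall fun t => ?_)
      dsimp only
      rw [hR_odd, hWs_neg]; ring
    have h1 : ∫ s, B (-s) = ∫ s, B s := integral_neg_eq_self B volume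
    rw [integral_congr_ae (Filter.Eventually.of_forall hodd), integral_neg] at h1
    linarith
  calc ∫ s, ∫ t, F s t * (Ws s * Ws t)
      = ∫ s, ((∫ t, G s t * (Ws s * Ws t)) + ∫ t, R s t * (Ws s * Ws t)) := by
        refine integral_congr_ae (Filter.Eventually.of_forall fun s => ?_)
        dsimp only
        rw [← integral_add (hGW_int s) (hRW_int s)]
        refine integral_congr_ae (Filter.Eventually.of_forall fun t => ?_)
        dsimp only
        rw [hF]; ring
    _ = (∫ s, ∫ t, G s t * (Ws s * Ws t)) + ∫ s, ∫ t, R s t * (Ws s * Ws t) :=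
        integral_add hIG hIR
    _ = ∫ s, ∫ t, G s t * (Ws s * Ws t) := by rw [zeroR, add_zero]


lemma bdd_comb1 {a b c d : ℝ} (h1 : |a| ≤ 1) (h2 : |b| ≤ 1) (h3 : |c| ≤ 1) (h4 : |d| ≤ 1) :
    |a + b * c - 2 * d| ≤ 4 := by
  rw [abs_le] at *
  constructor <;> nlinarith [h1.1, h1.2, h2.1, h2.2, h3.1, h3.2, h4.1, h4.2]

lemma bdd_comb2 {a b : ℝ} (h1 : |a| ≤ 1) (h2 : |b| ≤ 1) : |2 * a - b| ≤ 3 := by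
  rw [abs_le] at *
  constructor <;> linarith

lemma abs_mul_le_one {a b : ℝ} (h1 : |a| ≤ 1) (h2 : |b| ≤ 1) : |a * b| ≤ 1 := by
  rw [abs_mul]
  nlinarith [abs_nonneg a, abs_nonneg b]


/-- For an integrable symmetric nonnegative weight `w` on `ℝ` and random
vectors `U, V : Ω → ℝ^k`, with `(U',V')` an independent copy of `(U,V)` and `V''` a
further independent copy of `V` (realized by extra product coordinates),
`∫∫ |φ_{U,V}(s,t) − φ_U(s)φ_V(t)|² Π_j w(s_j)w(t_j) ds dt
 = ∫∫ (E[cos⟨s,U−U'⟩cos⟨t,V−V'⟩] + E[cos⟨s,U−U'⟩]E[cos⟨t,V−V'⟩]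
      − 2E[cos⟨s,U−U'⟩cos⟨t,V−V''⟩]) Π_j w(s_j)w(t_j) ds dt`. -/
theorem distCovariance_cos_representation
    {Ω : Type*} [MeasurableSpace Ω] (ℙ : Measure Ω) [IsProbabilityMeasure ℙ]
    {k : ℕ} (hk : 1 ≤ k) (U V : Ω → (Fin k → ℝ))
    (hU : Measurable U) (hV : Measurable V)
    (w : ℝ → ℝ) (hw : Measurable w) (hw_nonneg : ∀ s, 0 ≤ w s)
    (hw_int : Integrable w) (hw_symm : ∀ s, w (-s) = w s) :
    (∫ (s : Fin k → ℝ), ∫ (t : Fin k → ℝ),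
        ‖(∫ ω, Complex.exp (Complex.I *
              ((∑ j, (s j * U ω j + t j * V ω j) : ℝ) : ℂ)) ∂ℙ) -
            (∫ ω, Complex.exp (Complex.I * ((∑ j, s j * U ω j : ℝ) : ℂ)) ∂ℙ) *
            (∫ ω, Complex.exp (Complex.I * ((∑ j, t j * V ω j : ℝ) : ℂ)) ∂ℙ)‖ ^ 2 *
          ∏ j, w (s j) * w (t j))
    = ∫ (s : Fin k → ℝ), ∫ (t : Fin k → ℝ),
        ((∫ ω : Ω × Ω, Real.cos (∑ j, s j * (U ω.1 j - U ω.2 j)) *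
              Real.cos (∑ j, t j * (V ω.1 j - V ω.2 j)) ∂(ℙ.prod ℙ))
          + (∫ ω : Ω × Ω, Real.cos (∑ j, s j * (U ω.1 j - U ω.2 j)) ∂(ℙ.prod ℙ)) *
            (∫ ω : Ω × Ω, Real.cos (∑ j, t j * (V ω.1 j - V ω.2 j)) ∂(ℙ.prod ℙ))
          - 2 * ∫ ω : Ω × Ω × Ω, Real.cos (∑ j, s j * (U ω.1 j - U ω.2.1 j)) *
              Real.cos (∑ j, t j * (V ω.1 j - V ω.2.2 j)) ∂(ℙ.prod (ℙ.prod ℙ))) *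
          ∏ j, w (s j) * w (t j) := by
  have prod_split : ∀ (s t : Fin k → ℝ),
      (∏ j, w (s j) * w (t j)) = (∏ j, w (s j)) * ∏ j, w (t j) :=
    fun s t => Finset.prod_mul_distrib
  simp only [prod_split]
  -- measurability of the five parametric integrals
  have mA1 : Measurable fun q : (Fin k → ℝ) × (Fin k → ℝ) =>
      ∫ p : Ω × Ω, Real.cos (∑ j, q.1 j * (U p.1 j - U p.2 j)) *
        Real.cos (∑ j, q.2 j * (V p.1 j - V p.2 j)) ∂(ℙ.prod ℙ) :=
    (MeasureTheory.StronglyMeasurable.integral_prod_right'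
      (f := fun z : ((Fin k → ℝ) × (Fin k → ℝ)) × (Ω × Ω) =>
        Real.cos (∑ j, z.1.1 j * (U z.2.1 j - U z.2.2 j)) *
          Real.cos (∑ j, z.1.2 j * (V z.2.1 j - V z.2.2 j)))
      (Measurable.stronglyMeasurable (by fun_prop))).measurable
  have mA2 : Measurable fun q : (Fin k → ℝ) × (Fin k → ℝ) =>
      ∫ p : Ω × Ω, Real.cos (∑ j, q.1 j * (U p.1 j - U p.2 j)) ∂(ℙ.prod ℙ) :=
    (MeasureTheory.StronglyMeasurable.integral_prod_right'
      (f := fun z : ((Fin k → ℝ) × (Fin k → ℝ)) × (Ω × Ω) =>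
        Real.cos (∑ j, z.1.1 j * (U z.2.1 j - U z.2.2 j)))
      (Measurable.stronglyMeasurable (by fun_prop))).measurable
  have mA3 : Measurable fun q : (Fin k → ℝ) × (Fin k → ℝ) =>
      ∫ p : Ω × Ω, Real.cos (∑ j, q.2 j * (V p.1 j - V p.2 j)) ∂(ℙ.prod ℙ) :=
    (MeasureTheory.StronglyMeasurable.integral_prod_right'
      (f := fun z : ((Fin k → ℝ) × (Fin k → ℝ)) × (Ω × Ω) =>
        Real.cos (∑ j, z.1.2 j * (V z.2.1 j - V z.2.2 j)))
      (Measurable.stronglyMeasurable (by fun_prop))).measurable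
  have mA4 : Measurable fun q : (Fin k → ℝ) × (Fin k → ℝ) =>
      ∫ p : Ω × Ω × Ω, Real.cos (∑ j, q.1 j * (U p.1 j - U p.2.1 j)) *
        Real.cos (∑ j, q.2 j * (V p.1 j - V p.2.2 j)) ∂(ℙ.prod (ℙ.prod ℙ)) :=
    (MeasureTheory.StronglyMeasurable.integral_prod_right'
      (f := fun z : ((Fin k → ℝ) × (Fin k → ℝ)) × (Ω × Ω × Ω) =>
        Real.cos (∑ j, z.1.1 j * (U z.2.1 j - U z.2.2.1 j)) *
          Real.cos (∑ j, z.1.2 j * (V z.2.1 j - V z.2.2.2 j)))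
      (Measurable.stronglyMeasurable (by fun_prop))).measurable
  have mA5 : Measurable fun q : (Fin k → ℝ) × (Fin k → ℝ) =>
      ∫ p : Ω × Ω, Real.sin (∑ j, q.1 j * (U p.1 j - U p.2 j)) *
        Real.sin (∑ j, q.2 j * (V p.1 j - V p.2 j)) ∂(ℙ.prod ℙ) :=
    (MeasureTheory.StronglyMeasurable.integral_prod_right'
      (f := fun z : ((Fin k → ℝ) × (Fin k → ℝ)) × (Ω × Ω) =>
        Real.sin (∑ j, z.1.1 j * (U z.2.1 j - U z.2.2 j)) *
          Real.sin (∑ j, z.1.2 j * (V z.2.1 j - V z.2.2 j)))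
      (Measurable.stronglyMeasurable (by fun_prop))).measurable
  have mA6 : Measurable fun q : (Fin k → ℝ) × (Fin k → ℝ) =>
      ∫ p : Ω × Ω × Ω, Real.sin (∑ j, q.1 j * (U p.1 j - U p.2.1 j)) *
        Real.sin (∑ j, q.2 j * (V p.1 j - V p.2.2 j)) ∂(ℙ.prod (ℙ.prod ℙ)) :=
    (MeasureTheory.StronglyMeasurable.integral_prod_right'
      (f := fun z : ((Fin k → ℝ) × (Fin k → ℝ)) × (Ω × Ω × Ω) =>
        Real.sin (∑ j, z.1.1 j * (U z.2.1 j - U z.2.2.1 j)) *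
          Real.sin (∑ j, z.1.2 j * (V z.2.1 j - V z.2.2.2 j)))
      (Measurable.stronglyMeasurable (by fun_prop))).measurable
  refine main_aux
    (fun s t =>
      ‖(∫ ω, Complex.exp (Complex.I *
            ((∑ j, (s j * U ω j + t j * V ω j) : ℝ) : ℂ)) ∂ℙ) -
          (∫ ω, Complex.exp (Complex.I * ((∑ j, s j * U ω j : ℝ) : ℂ)) ∂ℙ) *
          (∫ ω, Complex.exp (Complex.I * ((∑ j, t j * V ω j : ℝ) : ℂ)) ∂ℙ)‖ ^ 2)
    (fun s t =>
      (∫ ω : Ω × Ω, Real.cos (∑ j, s j * (U ω.1 j - U ω.2 j)) *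
            Real.cos (∑ j, t j * (V ω.1 j - V ω.2 j)) ∂(ℙ.prod ℙ))
        + (∫ ω : Ω × Ω, Real.cos (∑ j, s j * (U ω.1 j - U ω.2 j)) ∂(ℙ.prod ℙ)) *
          (∫ ω : Ω × Ω, Real.cos (∑ j, t j * (V ω.1 j - V ω.2 j)) ∂(ℙ.prod ℙ))
        - 2 * ∫ ω : Ω × Ω × Ω, Real.cos (∑ j, s j * (U ω.1 j - U ω.2.1 j)) *
            Real.cos (∑ j, t j * (V ω.1 j - V ω.2.2 j)) ∂(ℙ.prod (ℙ.prod ℙ)))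
    (fun s t =>
      2 * (∫ ω : Ω × Ω × Ω, Real.sin (∑ j, s j * (U ω.1 j - U ω.2.1 j)) *
            Real.sin (∑ j, t j * (V ω.1 j - V ω.2.2 j)) ∂(ℙ.prod (ℙ.prod ℙ)))
        - ∫ ω : Ω × Ω, Real.sin (∑ j, s j * (U ω.1 j - U ω.2 j)) *
            Real.sin (∑ j, t j * (V ω.1 j - V ω.2 j)) ∂(ℙ.prod ℙ))
    (fun s => ∏ j, w (s j))
    ?_ ?_ ?_ ?_ ?_ ?_ ?_ ?_ ?_ ?_
  · exact Finset.measurable_prod _ fun j _ => hw.comp (measurable_pi_apply j)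
  · exact Integrable.fintype_prod fun _ => hw_int
  · exact fun s => Finset.prod_nonneg fun j _ => hw_nonneg _
  · exact fun s => Finset.prod_congr rfl fun j _ => by rw [Pi.neg_apply, hw_symm]
  · exact ((mA1.add (mA2.mul mA3)).sub (measurable_const.mul mA4)).stronglyMeasurable
  · exact ((measurable_const.mul mA6).sub mA5).stronglyMeasurable
  · intro s t
    exact bdd_comb1
      (abs_int_le_one _ fun p => abs_mul_le_one (Real.abs_cos_le_one _) (Real.abs_cos_le_one _))
      (abs_int_le_one _ fun p => Real.abs_cos_le_one _)
      (abs_int_le_one _ fun p => Real.abs_cos_le_one _)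
      (abs_int_le_one _ fun p => abs_mul_le_one (Real.abs_cos_le_one _) (Real.abs_cos_le_one _))
  · intro s t
    exact bdd_comb2
      (abs_int_le_one _ fun p => abs_mul_le_one (Real.abs_sin_le_one _) (Real.abs_sin_le_one _))
      (abs_int_le_one _ fun p => abs_mul_le_one (Real.abs_sin_le_one _) (Real.abs_sin_le_one _))
  · intro s t
    simp only [Pi.neg_apply, neg_mul, Finset.sum_neg_distrib, Real.sin_neg, integral_neg]
    ring
  · intro s t
    have hx : Measurable fun ω => ∑ j, s j * U ω j := by fun_prop
    have hy : Measurable fun ω => ∑ j, t j * V ω j := by fun_prop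
    have h := point_identity ℙ _ _ hx hy
    simp only [eI] at h
    simp only [Finset.sum_add_distrib, mul_sub, Finset.sum_sub_distrib]
    exact h
end

section
/- Let k ≥ 1, α ∈ (0,2), and let g_k(s) = c_k |s|^{−k−α} on ℝ^k, where c_k > 0 is the constant for which ∫_{ℝ^k} (1 − cos⟨s,x⟩) g_k(s) ds = |x|^α for all x ∈ ℝ^k. Let U, V be random vectors in ℝ^k with E[|U|^α] < ∞, E[|V|^α] < ∞ and E[|U|^α |V|^α] < ∞; let (U',V') be an independent copy of (U,V) and V'' an independent copy of V with (U,V), (U',V'), V'' mutually independent. Then ∫_{ℝ^k}∫_{ℝ^k} |φ_{U,V}(s,t) − φ_U(s)φ_V(t)|² g_k(s) g_k(t) ds dt = E[|U−U'|^α |V−V'|^α] + E[|U−U'|^α] · E[|V−V'|^α] − 2 E[|U−U'|^α |V−V''|^α], and all expectations on the right-hand side are finite. -/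
open MeasureTheory Real

open scoped ENNReal

namespace DCovAux

variable {k : ℕ}

noncomputable def nrm (α : ℝ) (x : Fin k → ℝ) : ℝ := (∑ j, x j ^ 2) ^ (α / 2)

lemma nrm_nonneg (α : ℝ) (x : Fin k → ℝ) : 0 ≤ nrm α x :=
  Real.rpow_nonneg (by positivity) _

lemma measurable_nrm (α : ℝ) : Measurable (nrm (k := k) α) := by
  unfold nrm; fun_prop

lemma nrm_eq_norm (α : ℝ) (x : Fin k → ℝ) :
    nrm α x = ‖(WithLp.equiv 2 (Fin k → ℝ)).symm x‖ ^ α := by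
  rw [EuclideanSpace.norm_eq]
  have h1 : ∀ i, ‖((WithLp.equiv 2 (Fin k → ℝ)).symm x) i‖ ^ 2 = x i ^ 2 := by
    intro i; rw [Real.norm_eq_abs, sq_abs]; rfl
  simp only [h1]
  rw [Real.sqrt_eq_rpow, ← Real.rpow_mul (by positivity)]
  rw [nrm]; ring_nf
  
lemma two_rpow_bound {α a b : ℝ} (hα : 0 ≤ α) (ha : 0 ≤ a) (hb : 0 ≤ b) :
    (a + b) ^ α ≤ 2 ^ α * (a ^ α + b ^ α) := by
  rcases le_total a b with h | h
  · calc (a + b) ^ α ≤ (2 * b) ^ α := by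
          apply Real.rpow_le_rpow (by linarith) (by linarith) hα
    _ = 2 ^ α * b ^ α := Real.mul_rpow (by norm_num) hb
    _ ≤ 2 ^ α * (a ^ α + b ^ α) := by
          have := Real.rpow_nonneg ha α
          have h2 : (0:ℝ) ≤ 2 ^ α := Real.rpow_nonneg (by norm_num) α
          nlinarith
  · calc (a + b) ^ α ≤ (2 * a) ^ α := by
          apply Real.rpow_le_rpow (by linarith) (by linarith) hα
    _ = 2 ^ α * a ^ α := Real.mul_rpow (by norm_num) ha
    _ ≤ 2 ^ α * (a ^ α + b ^ α) := by
          have := Real.rpow_nonneg hb α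
          have h2 : (0:ℝ) ≤ 2 ^ α := Real.rpow_nonneg (by norm_num) α
          nlinarith

lemma nrm_sub_le {α : ℝ} (hα : 0 ≤ α) (x y : Fin k → ℝ) :
    nrm α (x - y) ≤ 2 ^ α * (nrm α x + nrm α y) := by
  rw [nrm_eq_norm, nrm_eq_norm, nrm_eq_norm, show (WithLp.equiv 2 (Fin k → ℝ)).symm (x - y) = (WithLp.equiv 2 (Fin k → ℝ)).symm x - (WithLp.equiv 2 (Fin k → ℝ)).symm y from rfl]
  calc ‖(WithLp.equiv 2 (Fin k → ℝ)).symm x - (WithLp.equiv 2 (Fin k → ℝ)).symm y‖ ^ α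
      ≤ (‖(WithLp.equiv 2 (Fin k → ℝ)).symm x‖ + ‖(WithLp.equiv 2 (Fin k → ℝ)).symm y‖) ^ α :=
        Real.rpow_le_rpow (norm_nonneg _) (norm_sub_le _ _) hα
    _ ≤ 2 ^ α * (‖(WithLp.equiv 2 (Fin k → ℝ)).symm x‖ ^ α + ‖(WithLp.equiv 2 (Fin k → ℝ)).symm y‖ ^ α) :=
        two_rpow_bound hα (norm_nonneg _) (norm_nonneg _)


variable {Ω : Type*} [MeasurableSpace Ω] {ℙ : Measure Ω} [IsProbabilityMeasure ℙ]

lemma int_fst {f : Ω → ℝ} (hf : Integrable f ℙ) {W : Type*} [MeasurableSpace W]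
    (ν : Measure W) [IsProbabilityMeasure ν] :
    Integrable (fun z : Ω × W => f z.1) (ℙ.prod ν) := by
  simpa using hf.mul_prod (integrable_const (1:ℝ) (μ := ν))

lemma int_snd {f : Ω → ℝ} (hf : Integrable f ℙ) {W : Type*} [MeasurableSpace W]
    (ν : Measure W) [IsProbabilityMeasure ν] :
    Integrable (fun z : W × Ω => f z.2) (ν.prod ℙ) := by
  simpa using (integrable_const (1:ℝ) (μ := ν)).mul_prod hf

variable {α : ℝ} {U V : Ω → Fin k → ℝ}

lemma meas_nrm_sub₂ (hU : Measurable U) :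
    Measurable fun ω : Ω × Ω => nrm α (U ω.1 - U ω.2) :=
  (measurable_nrm α).comp ((hU.comp measurable_fst).sub (hU.comp measurable_snd))

lemma integrable1 (hα : 0 ≤ α) (hU : Measurable U) (hV : Measurable V) (hUα : Integrable (fun ω => nrm α (U ω)) ℙ)
    (hVα : Integrable (fun ω => nrm α (V ω)) ℙ)
    (hUVα : Integrable (fun ω => nrm α (U ω) * nrm α (V ω)) ℙ) :
    Integrable (fun ω : Ω × Ω => nrm α (U ω.1 - U ω.2) * nrm α (V ω.1 - V ω.2)) (ℙ.prod ℙ) := by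
  have i11 := int_fst hUVα (ν := ℙ)
  have i22 := int_snd hUVα (ν := ℙ)
  have i12 := hUα.mul_prod hVα
  have i21' := hVα.mul_prod hUα
  have i21 : Integrable (fun z : Ω × Ω => nrm α (U z.2) * nrm α (V z.1)) (ℙ.prod ℙ) := by
    have : (fun z : Ω × Ω => nrm α (U z.2) * nrm α (V z.1))
        = fun z : Ω × Ω => nrm α (V z.1) * nrm α (U z.2) := by funext z; ring
    rw [this]; exact i21'
  have hG : Integrable (fun ω : Ω × Ω =>
      (2 ^ α * (nrm α (U ω.1) + nrm α (U ω.2))) * (2 ^ α * (nrm α (V ω.1) + nrm α (V ω.2))))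
      (ℙ.prod ℙ) := by
    have : (fun ω : Ω × Ω =>
        (2 ^ α * (nrm α (U ω.1) + nrm α (U ω.2))) * (2 ^ α * (nrm α (V ω.1) + nrm α (V ω.2))))
        = fun ω : Ω × Ω => (2 ^ α * 2 ^ α) *
            (nrm α (U ω.1) * nrm α (V ω.1) + nrm α (U ω.1) * nrm α (V ω.2)
              + (nrm α (U ω.2) * nrm α (V ω.1) + nrm α (U ω.2) * nrm α (V ω.2))) := by
      funext ω; ring
    rw [this]
    exact (((i11.add i12).add (i21.add i22))).const_mul _
  refine hG.mono' ?_ (ae_of_all _ fun ω => ?_)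
  · exact ((meas_nrm_sub₂ hU).mul (meas_nrm_sub₂ hV)).aestronglyMeasurable
  · rw [Real.norm_eq_abs, abs_of_nonneg (mul_nonneg (nrm_nonneg _ _) (nrm_nonneg _ _))]
    exact mul_le_mul (nrm_sub_le hα _ _) (nrm_sub_le hα _ _) (nrm_nonneg _ _)
      (mul_nonneg (Real.rpow_nonneg (by norm_num) _)
        (add_nonneg (nrm_nonneg _ _) (nrm_nonneg _ _)))

lemma integrable2 (hα : 0 ≤ α) (hU : Measurable U) (hUα : Integrable (fun ω => nrm α (U ω)) ℙ) :
    Integrable (fun ω : Ω × Ω => nrm α (U ω.1 - U ω.2)) (ℙ.prod ℙ) := by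
  have hG : Integrable (fun ω : Ω × Ω => 2 ^ α * (nrm α (U ω.1) + nrm α (U ω.2))) (ℙ.prod ℙ) :=
    ((int_fst hUα ℙ).add (int_snd hUα ℙ)).const_mul _
  refine hG.mono' (meas_nrm_sub₂ hU).aestronglyMeasurable (ae_of_all _ fun ω => ?_)
  rw [Real.norm_eq_abs, abs_of_nonneg (nrm_nonneg _ _)]
  exact nrm_sub_le hα _ _

lemma integrable3 (hα : 0 ≤ α) (hU : Measurable U) (hV : Measurable V) (hUα : Integrable (fun ω => nrm α (U ω)) ℙ)
    (hVα : Integrable (fun ω => nrm α (V ω)) ℙ)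
    (hUVα : Integrable (fun ω => nrm α (U ω) * nrm α (V ω)) ℙ) :
    Integrable (fun ω : Ω × Ω × Ω => nrm α (U ω.1 - U ω.2.1) * nrm α (V ω.1 - V ω.2.2))
      (ℙ.prod (ℙ.prod ℙ)) := by
  have i11 := int_fst hUVα (ν := ℙ.prod ℙ)
  have i12 : Integrable (fun z : Ω × Ω × Ω => nrm α (U z.1) * nrm α (V z.2.2)) (ℙ.prod (ℙ.prod ℙ)) :=
    hUα.mul_prod (int_snd hVα ℙ)
  have i21 : Integrable (fun z : Ω × Ω × Ω => nrm α (U z.2.1) * nrm α (V z.1)) (ℙ.prod (ℙ.prod ℙ)) := by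
    have : (fun z : Ω × Ω × Ω => nrm α (U z.2.1) * nrm α (V z.1))
        = fun z : Ω × Ω × Ω => nrm α (V z.1) * nrm α (U z.2.1) := by funext z; ring
    rw [this]; exact hVα.mul_prod (int_fst hUα ℙ)
  have i22 : Integrable (fun z : Ω × Ω × Ω => nrm α (U z.2.1) * nrm α (V z.2.2)) (ℙ.prod (ℙ.prod ℙ)) :=
    int_snd (hUα.mul_prod hVα) (ν := ℙ)
  have hmeas1 : Measurable fun ω : Ω × Ω × Ω => nrm α (U ω.1 - U ω.2.1) :=
    (measurable_nrm α).comp ((hU.comp measurable_fst).sub (hU.comp (measurable_fst.comp measurable_snd)))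
  have hmeas2 : Measurable fun ω : Ω × Ω × Ω => nrm α (V ω.1 - V ω.2.2) :=
    (measurable_nrm α).comp ((hV.comp measurable_fst).sub (hV.comp (measurable_snd.comp measurable_snd)))
  have hG : Integrable (fun ω : Ω × Ω × Ω =>
      (2 ^ α * (nrm α (U ω.1) + nrm α (U ω.2.1))) * (2 ^ α * (nrm α (V ω.1) + nrm α (V ω.2.2))))
      (ℙ.prod (ℙ.prod ℙ)) := by
    have : (fun ω : Ω × Ω × Ω =>
        (2 ^ α * (nrm α (U ω.1) + nrm α (U ω.2.1))) * (2 ^ α * (nrm α (V ω.1) + nrm α (V ω.2.2))))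
        = fun ω : Ω × Ω × Ω => (2 ^ α * 2 ^ α) *
            (nrm α (U ω.1) * nrm α (V ω.1) + nrm α (U ω.1) * nrm α (V ω.2.2)
              + (nrm α (U ω.2.1) * nrm α (V ω.1) + nrm α (U ω.2.1) * nrm α (V ω.2.2))) := by
      funext ω; ring
    rw [this]
    exact (((i11.add i12).add (i21.add i22))).const_mul _
  refine hG.mono' (hmeas1.mul hmeas2).aestronglyMeasurable (ae_of_all _ fun ω => ?_)
  rw [Real.norm_eq_abs, abs_of_nonneg (mul_nonneg (nrm_nonneg _ _) (nrm_nonneg _ _))]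
  exact mul_le_mul (nrm_sub_le hα _ _) (nrm_sub_le hα _ _) (nrm_nonneg _ _)
    (mul_nonneg (Real.rpow_nonneg (by norm_num) _)
      (add_nonneg (nrm_nonneg _ _) (nrm_nonneg _ _)))

noncomputable def gk (k : ℕ) (c α : ℝ) : (Fin k → ℝ) → ℝ :=
  fun s => c * (∑ j, s j ^ 2) ^ ((-((k : ℝ) + α)) / 2)

lemma gk_nonneg {c : ℝ} (hc : 0 ≤ c) (α : ℝ) (s : Fin k → ℝ) : 0 ≤ gk k c α s :=
  mul_nonneg hc (Real.rpow_nonneg (by positivity) _)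

lemma measurable_gk (c α : ℝ) : Measurable (gk k c α) := by unfold gk; fun_prop

lemma gk_neg (c α : ℝ) (s : Fin k → ℝ) : gk k c α (-s) = gk k c α s := by
  unfold gk
  congr 2
  exact Finset.sum_congr rfl fun j _ => by simp [Pi.neg_apply]

lemma one_sub_cos_nonneg (r : ℝ) : 0 ≤ 1 - Real.cos r := by linarith [Real.cos_le_one r]

variable {α c : ℝ}

section core
variable {W : Type*} [MeasurableSpace W] (μ : Measure W) [SFinite μ]
  {X Y : W → Fin k → ℝ} (hX : Measurable X) (hY : Measurable Y)
  (hgc : ∀ x : Fin k → ℝ,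
    ∫⁻ s : Fin k → ℝ, ENNReal.ofReal ((1 - Real.cos (∑ j, s j * x j)) * gk k c α s)
      = ENNReal.ofReal (nrm α x))
  (hc : 0 ≤ c)

include hX hY hgc hc in
lemma core (hint : Integrable (fun w => nrm α (X w) * nrm α (Y w)) μ) :
    ∫⁻ s : Fin k → ℝ, ∫⁻ t : Fin k → ℝ,
        (∫⁻ w, ENNReal.ofReal
            ((1 - Real.cos (∑ j, s j * X w j)) * (1 - Real.cos (∑ j, t j * Y w j))) ∂μ)
          * ENNReal.ofReal (gk k c α s * gk k c α t)
      = ENNReal.ofReal (∫ w, nrm α (X w) * nrm α (Y w) ∂μ) := by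
  have cos_nn := one_sub_cos_nonneg
  -- Step 1: rewrite integrand pointwise
  have step1 : ∀ s t : Fin k → ℝ,
      (∫⁻ w, ENNReal.ofReal
          ((1 - Real.cos (∑ j, s j * X w j)) * (1 - Real.cos (∑ j, t j * Y w j))) ∂μ)
        * ENNReal.ofReal (gk k c α s * gk k c α t)
      = ∫⁻ w, ENNReal.ofReal ((1 - Real.cos (∑ j, s j * X w j)) * gk k c α s)
          * ENNReal.ofReal ((1 - Real.cos (∑ j, t j * Y w j)) * gk k c α t) ∂μ := by
    intro s t
    rw [← lintegral_mul_const' _ _ ENNReal.ofReal_ne_top]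
    refine lintegral_congr fun w => ?_
    rw [← ENNReal.ofReal_mul (mul_nonneg (cos_nn _) (cos_nn _)),
      ← ENNReal.ofReal_mul (mul_nonneg (cos_nn _) (gk_nonneg hc _ _))]
    congr 1
    ring
  simp only [step1]
  -- Step 2: swap t and w, integrate out t
  have step2 : ∀ s : Fin k → ℝ,
      (∫⁻ t : Fin k → ℝ, ∫⁻ w, ENNReal.ofReal ((1 - Real.cos (∑ j, s j * X w j)) * gk k c α s)
          * ENNReal.ofReal ((1 - Real.cos (∑ j, t j * Y w j)) * gk k c α t) ∂μ)
      = ∫⁻ w, ENNReal.ofReal ((1 - Real.cos (∑ j, s j * X w j)) * gk k c α s)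
          * ENNReal.ofReal (nrm α (Y w)) ∂μ := by
    intro s
    rw [lintegral_lintegral_swap]
    · refine lintegral_congr fun w => ?_
      rw [lintegral_const_mul' _ _ ENNReal.ofReal_ne_top, hgc (Y w)]
    · apply Measurable.aemeasurable
      simp only [Function.uncurry_def]
      apply Measurable.fun_mul
      · apply Measurable.ennreal_ofReal
        apply Measurable.mul
        · apply Measurable.const_sub
          apply Real.measurable_cos.comp
          exact Finset.measurable_sum _ fun j _ =>
            (measurable_const.mul ((hX.comp measurable_snd).eval))
        · exact measurable_const
      · apply Measurable.ennreal_ofReal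
        apply Measurable.mul
        · apply Measurable.const_sub
          apply Real.measurable_cos.comp
          exact Finset.measurable_sum _ fun j _ =>
            ((measurable_fst.eval).mul ((hY.comp measurable_snd).eval))
        · exact (measurable_gk c α).comp measurable_fst
  simp only [step2]
  -- Step 3: swap s and w, integrate out s
  rw [lintegral_lintegral_swap]
  · have step3 : ∀ w : W,
        (∫⁻ s : Fin k → ℝ, ENNReal.ofReal ((1 - Real.cos (∑ j, s j * X w j)) * gk k c α s)
          * ENNReal.ofReal (nrm α (Y w))) = ENNReal.ofReal (nrm α (X w) * nrm α (Y w)) := by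
      intro w
      rw [lintegral_mul_const' _ _ ENNReal.ofReal_ne_top, hgc (X w),
        ← ENNReal.ofReal_mul (nrm_nonneg _ _)]
    simp only [step3]
    rw [← ofReal_integral_eq_lintegral_ofReal hint
      (ae_of_all _ fun w => mul_nonneg (nrm_nonneg _ _) (nrm_nonneg _ _))]
  · apply Measurable.aemeasurable
    simp only [Function.uncurry_def]
    apply Measurable.fun_mul
    · apply Measurable.ennreal_ofReal
      apply Measurable.mul
      · apply Measurable.const_sub
        apply Real.measurable_cos.comp
        exact Finset.measurable_sum _ fun j _ =>
          ((measurable_fst.eval).mul ((hX.comp measurable_snd).eval))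
      · exact (measurable_gk c α).comp measurable_fst
    · exact ((measurable_nrm α).comp (hY.comp measurable_snd)).ennreal_ofReal

include hX hgc hc in
lemma core1 (hint : Integrable (fun w => nrm α (X w)) μ) :
    ∫⁻ s : Fin k → ℝ,
        (∫⁻ w, ENNReal.ofReal (1 - Real.cos (∑ j, s j * X w j)) ∂μ) * ENNReal.ofReal (gk k c α s)
      = ENNReal.ofReal (∫ w, nrm α (X w) ∂μ) := by
  have step1 : ∀ s : Fin k → ℝ,
      (∫⁻ w, ENNReal.ofReal (1 - Real.cos (∑ j, s j * X w j)) ∂μ) * ENNReal.ofReal (gk k c α s)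
      = ∫⁻ w, ENNReal.ofReal ((1 - Real.cos (∑ j, s j * X w j)) * gk k c α s) ∂μ := by
    intro s
    rw [← lintegral_mul_const' _ _ ENNReal.ofReal_ne_top]
    exact lintegral_congr fun w =>
      (ENNReal.ofReal_mul (one_sub_cos_nonneg _)).symm
  simp only [step1]
  rw [lintegral_lintegral_swap]
  · simp only [hgc]
    rw [← ofReal_integral_eq_lintegral_ofReal hint (ae_of_all _ fun w => nrm_nonneg _ _)]
  · apply Measurable.aemeasurable
    apply Measurable.ennreal_ofReal
    apply Measurable.mul
    · apply Measurable.const_sub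
      apply Real.measurable_cos.comp
      exact Finset.measurable_sum _ fun j _ =>
        ((measurable_fst.eval).mul ((hX.comp measurable_snd).eval))
    · exact (measurable_gk c α).comp measurable_fst

end core
lemma integrable_of_bdd {W : Type*} [MeasurableSpace W] {μ : Measure W} [IsFiniteMeasure μ]
    {f : W → ℝ} (hf : Measurable f) (C : ℝ) (h : ∀ w, |f w| ≤ C) : Integrable f μ :=
  (integrable_const C).mono' hf.aestronglyMeasurable (ae_of_all _ fun w => by
    simpa [Real.norm_eq_abs] using h w)

lemma measurable_expi {W : Type*} [MeasurableSpace W] {f : W → ℝ} (hf : Measurable f) :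
    Measurable fun w => Complex.exp (Complex.I * (f w : ℂ)) :=
  Complex.measurable_exp.comp (measurable_const.mul (Complex.measurable_ofReal.comp hf))

lemma integrable_expi {W : Type*} [MeasurableSpace W] (μ : Measure W) [IsFiniteMeasure μ]
    {f : W → ℝ} (hf : Measurable f) :
    Integrable (fun w => Complex.exp (Complex.I * (f w : ℂ))) μ := by
  refine (integrable_const (1 : ℝ)).mono' (measurable_expi hf).aestronglyMeasurable
    (ae_of_all _ fun w => ?_)
  rw [Complex.norm_exp]
  simp

lemma cos_eq_re_expi (x : ℝ) : Real.cos x = (Complex.exp (Complex.I * (x : ℂ))).re := by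
  rw [mul_comm]; exact (Complex.exp_ofReal_mul_I_re x).symm

lemma integral_cos_eq {W : Type*} [MeasurableSpace W] (μ : Measure W) [IsFiniteMeasure μ]
    {f : W → ℝ} (hf : Measurable f) :
    ∫ w, Real.cos (f w) ∂μ = (∫ w, Complex.exp (Complex.I * (f w : ℂ)) ∂μ).re := by
  have h := integral_re (μ := μ) (f := fun w => Complex.exp (Complex.I * (f w : ℂ)))
    (integrable_expi μ hf)
  simp only [RCLike.re_to_complex] at h
  rw [← h]
  exact integral_congr_ae (ae_of_all _ fun w => cos_eq_re_expi (f w))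

lemma expi_neg (x : ℝ) :
    Complex.exp (Complex.I * ((-x : ℝ) : ℂ)) = starRingEnd ℂ (Complex.exp (Complex.I * (x : ℂ))) := by
  rw [← Complex.exp_conj]
  congr 1
  simp [Complex.conj_I]
  try ring

lemma int_expi_neg {W : Type*} [MeasurableSpace W] (μ : Measure W) (f : W → ℝ) :
    ∫ w, Complex.exp (Complex.I * ((-f w : ℝ) : ℂ)) ∂μ
      = starRingEnd ℂ (∫ w, Complex.exp (Complex.I * (f w : ℂ)) ∂μ) := by
  rw [← integral_conj]
  exact integral_congr_ae (ae_of_all _ fun w => expi_neg (f w))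

lemma int_expi_add {W1 W2 : Type*} [MeasurableSpace W1] [MeasurableSpace W2]
    (μ : Measure W1) (ν : Measure W2) [SFinite μ] [SFinite ν] (f : W1 → ℝ) (g : W2 → ℝ) :
    ∫ z : W1 × W2, Complex.exp (Complex.I * ((f z.1 + g z.2 : ℝ) : ℂ)) ∂(μ.prod ν)
      = (∫ w, Complex.exp (Complex.I * (f w : ℂ)) ∂μ)
        * ∫ w, Complex.exp (Complex.I * (g w : ℂ)) ∂ν := by
  have key : ∀ z : W1 × W2, Complex.exp (Complex.I * ((f z.1 + g z.2 : ℝ) : ℂ))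
      = Complex.exp (Complex.I * (f z.1 : ℂ)) * Complex.exp (Complex.I * (g z.2 : ℂ)) := by
    intro z
    rw [← Complex.exp_add]
    congr 1
    push_cast
    ring
  simp only [key]
  exact integral_prod_mul (fun w => Complex.exp (Complex.I * (f w : ℂ)))
    (fun w => Complex.exp (Complex.I * (g w : ℂ)))

lemma int_fst_c {W1 W2 : Type*} [MeasurableSpace W1] [MeasurableSpace W2]
    (μ : Measure W1) (ν : Measure W2) [SFinite μ] [IsProbabilityMeasure ν] (h : W1 → ℂ) :
    ∫ z : W1 × W2, h z.1 ∂(μ.prod ν) = ∫ w, h w ∂μ := by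
  simpa using integral_prod_mul (μ := μ) (ν := ν) h (fun _ => (1 : ℂ))

lemma int_snd_c {W1 W2 : Type*} [MeasurableSpace W1] [MeasurableSpace W2]
    (μ : Measure W1) (ν : Measure W2) [IsProbabilityMeasure μ] [SFinite ν] (h : W2 → ℂ) :
    ∫ z : W1 × W2, h z.2 ∂(μ.prod ν) = ∫ w, h w ∂ν := by
  simpa using integral_prod_mul (μ := μ) (ν := ν) (fun _ => (1 : ℂ)) h

lemma cosProd {W1 W2 : Type*} [MeasurableSpace W1] [MeasurableSpace W2]
    (μ : Measure W1) (ν : Measure W2) [IsProbabilityMeasure μ] [IsProbabilityMeasure ν]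
    {f : W1 → ℝ} {g : W2 → ℝ} (hf : Measurable f) (hg : Measurable g) :
    ∫ z : W1 × W2, Real.cos (f z.1 - g z.2) ∂(μ.prod ν)
      = ((∫ w, Complex.exp (Complex.I * (f w : ℂ)) ∂μ)
          * starRingEnd ℂ (∫ w, Complex.exp (Complex.I * (g w : ℂ)) ∂ν)).re := by
  have hm : Measurable fun z : W1 × W2 => f z.1 - g z.2 :=
    (hf.comp measurable_fst).sub (hg.comp measurable_snd)
  rw [integral_cos_eq _ hm]
  congr 1
  have : ∀ z : W1 × W2, ((f z.1 - g z.2 : ℝ) : ℂ) = ((f z.1 + (fun w => -g w) z.2 : ℝ) : ℂ) := by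
    intro z; push_cast; ring
  rw [show (fun z : W1 × W2 => Complex.exp (Complex.I * ((f z.1 - g z.2 : ℝ) : ℂ)))
      = fun z : W1 × W2 => Complex.exp (Complex.I * ((f z.1 + (fun w => -g w) z.2 : ℝ) : ℂ)) by
    funext z; rw [this z]]
  rw [int_expi_add μ ν f (fun w => -g w), int_expi_neg]

lemma expand_T {Z : Type*} [MeasurableSpace Z] {μZ : Measure Z} [IsProbabilityMeasure μZ]
    {p q : Z → ℝ} (hp : Measurable p) (hq : Measurable q) :
    ∫ z, (1 - Real.cos (p z)) * (1 - Real.cos (q z)) ∂μZ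
      = 1 - ∫ z, Real.cos (p z) ∂μZ - ∫ z, Real.cos (q z) ∂μZ
        + ((∫ z, Real.cos (p z + q z) ∂μZ) + ∫ z, Real.cos (p z - q z) ∂μZ) / 2 := by
  have icp : Integrable (fun z => Real.cos (p z)) μZ :=
    integrable_of_bdd (Real.measurable_cos.comp hp) 1 (fun z => Real.abs_cos_le_one _)
  have icq : Integrable (fun z => Real.cos (q z)) μZ :=
    integrable_of_bdd (Real.measurable_cos.comp hq) 1 (fun z => Real.abs_cos_le_one _)
  have icpq : Integrable (fun z => Real.cos (p z + q z)) μZ :=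
    integrable_of_bdd (Real.measurable_cos.comp (hp.add hq)) 1 (fun z => Real.abs_cos_le_one _)
  have icpq' : Integrable (fun z => Real.cos (p z - q z)) μZ :=
    integrable_of_bdd (Real.measurable_cos.comp (hp.sub hq)) 1 (fun z => Real.abs_cos_le_one _)
  have key : ∀ z, (1 - Real.cos (p z)) * (1 - Real.cos (q z))
      = 1 - Real.cos (p z) - Real.cos (q z) + (Real.cos (p z + q z) + Real.cos (p z - q z)) / 2 := by
    intro z
    rw [Real.cos_add, Real.cos_sub]
    ring
  rw [show (fun z => (1 - Real.cos (p z)) * (1 - Real.cos (q z)))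
      = fun z => 1 - Real.cos (p z) - Real.cos (q z)
          + (Real.cos (p z + q z) + Real.cos (p z - q z)) / 2 from funext key]
  have A : Integrable (fun z => 1 - Real.cos (p z) - Real.cos (q z)) μZ :=
    ((integrable_const 1).sub icp).sub icq
  have A' : Integrable (fun z => 1 - Real.cos (p z)) μZ := (integrable_const 1).sub icp
  have B : Integrable (fun z => (Real.cos (p z + q z) + Real.cos (p z - q z)) / 2) μZ :=
    (icpq.add icpq').div_const 2
  rw [integral_add A B, integral_sub A' icq, integral_sub (integrable_const 1) icp,
    integral_div, integral_add icpq icpq']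
  simp

section char
variable {Ω : Type*} [MeasurableSpace Ω] (ℙ : Measure Ω) [IsProbabilityMeasure ℙ]

lemma char {θ η : Ω → ℝ} (hθ : Measurable θ) (hη : Measurable η) :
    (‖(∫ ω, Complex.exp (Complex.I * ((θ ω + η ω : ℝ) : ℂ)) ∂ℙ)
        - (∫ ω, Complex.exp (Complex.I * ((θ ω : ℝ) : ℂ)) ∂ℙ)
          * ∫ ω, Complex.exp (Complex.I * ((η ω : ℝ) : ℂ)) ∂ℙ‖ ^ 2
      + ‖(∫ ω, Complex.exp (Complex.I * ((θ ω - η ω : ℝ) : ℂ)) ∂ℙ)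
        - (∫ ω, Complex.exp (Complex.I * ((θ ω : ℝ) : ℂ)) ∂ℙ)
          * ∫ ω, Complex.exp (Complex.I * ((-η ω : ℝ) : ℂ)) ∂ℙ‖ ^ 2)
    + 4 * ∫ z : Ω × Ω × Ω,
        (1 - Real.cos (θ z.1 - θ z.2.1)) * (1 - Real.cos (η z.1 - η z.2.2)) ∂(ℙ.prod (ℙ.prod ℙ))
    = 2 * ∫ z : Ω × Ω,
        (1 - Real.cos (θ z.1 - θ z.2)) * (1 - Real.cos (η z.1 - η z.2)) ∂(ℙ.prod ℙ)
      + 2 * ((∫ z : Ω × Ω, (1 - Real.cos (θ z.1 - θ z.2)) ∂(ℙ.prod ℙ))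
          * ∫ z : Ω × Ω, (1 - Real.cos (η z.1 - η z.2)) ∂(ℙ.prod ℙ)) := by
  have hθη : Measurable fun ω => θ ω + η ω := hθ.add hη
  have hθη' : Measurable fun ω => θ ω - η ω := hθ.sub hη
  have hpm2 : Measurable fun z : Ω × Ω => θ z.1 - θ z.2 :=
    (hθ.comp measurable_fst).sub (hθ.comp measurable_snd)
  have hqm2 : Measurable fun z : Ω × Ω => η z.1 - η z.2 :=
    (hη.comp measurable_fst).sub (hη.comp measurable_snd)
  have hpm3 : Measurable fun z : Ω × Ω × Ω => θ z.1 - θ z.2.1 :=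
    (hθ.comp measurable_fst).sub (hθ.comp (measurable_fst.comp measurable_snd))
  have hqm3 : Measurable fun z : Ω × Ω × Ω => η z.1 - η z.2.2 :=
    (hη.comp measurable_fst).sub (hη.comp (measurable_snd.comp measurable_snd))
  set b := ∫ ω, Complex.exp (Complex.I * ((θ ω : ℝ) : ℂ)) ∂ℙ with hbdef
  set d := ∫ ω, Complex.exp (Complex.I * ((η ω : ℝ) : ℂ)) ∂ℙ with hddef
  set a := ∫ ω, Complex.exp (Complex.I * ((θ ω + η ω : ℝ) : ℂ)) ∂ℙ with hadef
  set a' := ∫ ω, Complex.exp (Complex.I * ((θ ω - η ω : ℝ) : ℂ)) ∂ℙ with ha'def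
  set d' := ∫ ω, Complex.exp (Complex.I * ((-η ω : ℝ) : ℂ)) ∂ℙ with hd'def
  have hd' : d' = starRingEnd ℂ d := int_expi_neg ℙ η
  -- cos integrals over Ω × Ω
  have c1 : ∫ z : Ω × Ω, Real.cos (θ z.1 - θ z.2) ∂(ℙ.prod ℙ)
      = (b * starRingEnd ℂ b).re := cosProd ℙ ℙ hθ hθ
  have c2 : ∫ z : Ω × Ω, Real.cos (η z.1 - η z.2) ∂(ℙ.prod ℙ)
      = (d * starRingEnd ℂ d).re := cosProd ℙ ℙ hη hη
  have c3 : ∫ z : Ω × Ω, Real.cos ((θ z.1 - θ z.2) + (η z.1 - η z.2)) ∂(ℙ.prod ℙ)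
      = (a * starRingEnd ℂ a).re := by
    have := cosProd ℙ ℙ hθη hθη
    rw [← this]
    exact integral_congr_ae (ae_of_all _ fun z => by simp only []; congr 1; ring)
  have c4 : ∫ z : Ω × Ω, Real.cos ((θ z.1 - θ z.2) - (η z.1 - η z.2)) ∂(ℙ.prod ℙ)
      = (a' * starRingEnd ℂ a').re := by
    have := cosProd ℙ ℙ hθη' hθη'
    rw [← this]
    exact integral_congr_ae (ae_of_all _ fun z => by simp only []; congr 1; ring)
  -- cos integrals over Ω × Ω × Ω
  have hg1 : Measurable fun w : Ω × Ω => θ w.1 := hθ.comp measurable_fst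
  have hg2 : Measurable fun w : Ω × Ω => η w.2 := hη.comp measurable_snd
  have hg3 : Measurable fun w : Ω × Ω => θ w.1 + η w.2 := hg1.add hg2
  have hg4 : Measurable fun w : Ω × Ω => θ w.1 - η w.2 := hg1.sub hg2
  have c5 : ∫ z : Ω × Ω × Ω, Real.cos (θ z.1 - θ z.2.1) ∂(ℙ.prod (ℙ.prod ℙ))
      = (b * starRingEnd ℂ b).re := by
    have := cosProd ℙ (ℙ.prod ℙ) hθ hg1
    rw [this, int_fst_c ℙ ℙ (fun w => Complex.exp (Complex.I * ((θ w : ℝ) : ℂ)))]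
  have c6 : ∫ z : Ω × Ω × Ω, Real.cos (η z.1 - η z.2.2) ∂(ℙ.prod (ℙ.prod ℙ))
      = (d * starRingEnd ℂ d).re := by
    have := cosProd ℙ (ℙ.prod ℙ) hη hg2
    rw [this, int_snd_c ℙ ℙ (fun w => Complex.exp (Complex.I * ((η w : ℝ) : ℂ)))]
  have c7 : ∫ z : Ω × Ω × Ω,
        Real.cos ((θ z.1 - θ z.2.1) + (η z.1 - η z.2.2)) ∂(ℙ.prod (ℙ.prod ℙ))
      = (a * starRingEnd ℂ (b * d)).re := by
    have h1 := cosProd ℙ (ℙ.prod ℙ) hθη hg3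
    rw [int_expi_add ℙ ℙ θ η] at h1
    rw [← h1]
    exact integral_congr_ae (ae_of_all _ fun z => by simp only []; congr 1; ring)
  have c8 : ∫ z : Ω × Ω × Ω,
        Real.cos ((θ z.1 - θ z.2.1) - (η z.1 - η z.2.2)) ∂(ℙ.prod (ℙ.prod ℙ))
      = (a' * starRingEnd ℂ (b * d')).re := by
    have h1 := cosProd ℙ (ℙ.prod ℙ) hθη' hg4
    have h2 : ∫ w : Ω × Ω, Complex.exp (Complex.I * ((θ w.1 - η w.2 : ℝ) : ℂ)) ∂(ℙ.prod ℙ)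
        = b * d' := by
      have h3 : ∀ w : Ω × Ω, Complex.exp (Complex.I * ((θ w.1 - η w.2 : ℝ) : ℂ))
          = Complex.exp (Complex.I * ((θ w.1 + (fun ω => -η ω) w.2 : ℝ) : ℂ)) := by
        intro w; congr 1
      rw [show (fun w : Ω × Ω => Complex.exp (Complex.I * ((θ w.1 - η w.2 : ℝ) : ℂ)))
          = fun w : Ω × Ω => Complex.exp (Complex.I * ((θ w.1 + (fun ω => -η ω) w.2 : ℝ) : ℂ))
          from funext h3]
      exact int_expi_add ℙ ℙ θ (fun ω => -η ω)
    rw [h2] at h1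
    rw [← h1]
    exact integral_congr_ae (ae_of_all _ fun z => by simp only []; congr 1; ring)
  -- expansions
  have hT1 := expand_T (μZ := ℙ.prod ℙ) hpm2 hqm2
  have hT3 := expand_T (μZ := ℙ.prod (ℙ.prod ℙ)) hpm3 hqm3
  rw [c1, c2, c3, c4] at hT1
  rw [c5, c6, c7, c8] at hT3
  -- T2 factors
  have icp2 : Integrable (fun z : Ω × Ω => Real.cos (θ z.1 - θ z.2)) (ℙ.prod ℙ) :=
    integrable_of_bdd (Real.measurable_cos.comp hpm2) 1 (fun z => Real.abs_cos_le_one _)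
  have icq2 : Integrable (fun z : Ω × Ω => Real.cos (η z.1 - η z.2)) (ℙ.prod ℙ) :=
    integrable_of_bdd (Real.measurable_cos.comp hqm2) 1 (fun z => Real.abs_cos_le_one _)
  have hTU : ∫ z : Ω × Ω, (1 - Real.cos (θ z.1 - θ z.2)) ∂(ℙ.prod ℙ)
      = 1 - (b * starRingEnd ℂ b).re := by
    rw [integral_sub (integrable_const 1) icp2, c1]; simp
  have hTV : ∫ z : Ω × Ω, (1 - Real.cos (η z.1 - η z.2)) ∂(ℙ.prod ℙ)
      = 1 - (d * starRingEnd ℂ d).re := by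
    rw [integral_sub (integrable_const 1) icq2, c2]; simp
  rw [hT1, hT3, hTU, hTV, hd']
  -- norms to normSq
  rw [Complex.sq_norm, Complex.sq_norm,
    Complex.normSq_sub, Complex.normSq_sub, Complex.normSq_mul, Complex.normSq_mul]
  simp only [Complex.mul_conj, Complex.ofReal_re, Complex.normSq_conj, map_mul,
    Complex.conj_conj]
  ring
end char

lemma abs_one_sub_cos_le_two (r : ℝ) : |1 - Real.cos r| ≤ 2 := by
  rw [abs_of_nonneg (one_sub_cos_nonneg r)]
  nlinarith [Real.neg_one_le_cos r]

lemma abs_one_sub_cos_mul_le (r q : ℝ) : |(1 - Real.cos r) * (1 - Real.cos q)| ≤ 4 := by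
  rw [abs_mul]
  nlinarith [abs_one_sub_cos_le_two r, abs_one_sub_cos_le_two q, abs_nonneg (1 - Real.cos r),
    abs_nonneg (1 - Real.cos q)]

lemma lintegral_neg_pi {k : ℕ} (f : (Fin k → ℝ) → ℝ≥0∞) : ∫⁻ x, f (-x) = ∫⁻ x, f x := by
  conv_rhs => rw [← Measure.map_neg_eq_self (volume : Measure (Fin k → ℝ)),
    show (Neg.neg : (Fin k → ℝ) → _) = ⇑(MeasurableEquiv.neg (Fin k → ℝ)) from rfl]
  rw [lintegral_map_equiv f (MeasurableEquiv.neg _)]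
  rfl

lemma lintegral2_add {S1 S2 : Type*} [MeasurableSpace S1] [MeasurableSpace S2]
    {μ1 : Measure S1} {μ2 : Measure S2} [SFinite μ2] (F : S1 → S2 → ℝ≥0∞)
    {G : S1 → S2 → ℝ≥0∞} (hG : Measurable fun p : S1 × S2 => G p.1 p.2) :
    ∫⁻ s, ∫⁻ t, (F s t + G s t) ∂μ2 ∂μ1
      = (∫⁻ s, ∫⁻ t, F s t ∂μ2 ∂μ1) + ∫⁻ s, ∫⁻ t, G s t ∂μ2 ∂μ1 := by
  have h1 : ∀ s, ∫⁻ t, (F s t + G s t) ∂μ2 = (∫⁻ t, F s t ∂μ2) + ∫⁻ t, G s t ∂μ2 := fun s =>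
    lintegral_add_right _ (hG.comp measurable_prodMk_left)
  simp only [h1]
  exact lintegral_add_right _ (Measurable.lintegral_prod_right' (f := fun p : S1 × S2 => G p.1 p.2) hG)

lemma lintegral2_const_mul {S1 S2 : Type*} [MeasurableSpace S1] [MeasurableSpace S2]
    {μ1 : Measure S1} {μ2 : Measure S2} (r : ℝ≥0∞) (hr : r ≠ ⊤) (F : S1 → S2 → ℝ≥0∞) :
    ∫⁻ s, ∫⁻ t, r * F s t ∂μ2 ∂μ1 = r * ∫⁻ s, ∫⁻ t, F s t ∂μ2 ∂μ1 := by
  calc ∫⁻ s, ∫⁻ t, r * F s t ∂μ2 ∂μ1 = ∫⁻ s, r * ∫⁻ t, F s t ∂μ2 ∂μ1 :=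
        lintegral_congr fun s => lintegral_const_mul' r _ hr
    _ = r * ∫⁻ s, ∫⁻ t, F s t ∂μ2 ∂μ1 := lintegral_const_mul' r _ hr

lemma ofReal_comb {n1 n2 T1 T3 TU TV G : ℝ} (hn1 : 0 ≤ n1) (hn2 : 0 ≤ n2) (hT1 : 0 ≤ T1)
    (hT3 : 0 ≤ T3) (hTU : 0 ≤ TU) (hTV : 0 ≤ TV) (hG : 0 ≤ G)
    (h : (n1 + n2) + 4 * T3 = 2 * T1 + 2 * (TU * TV)) :
    (ENNReal.ofReal (n1 * G) + ENNReal.ofReal (n2 * G))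
        + 4 * (ENNReal.ofReal T3 * ENNReal.ofReal G)
      = 2 * (ENNReal.ofReal T1 * ENNReal.ofReal G)
        + 2 * ((ENNReal.ofReal TU * ENNReal.ofReal TV) * ENNReal.ofReal G) := by
  have c4 : (4 : ℝ≥0∞) = ENNReal.ofReal (4 : ℝ) := by norm_num
  have c2 : (2 : ℝ≥0∞) = ENNReal.ofReal (2 : ℝ) := by norm_num
  rw [← ENNReal.ofReal_mul hT3, ← ENNReal.ofReal_mul hT1, ← ENNReal.ofReal_mul hTU,
    ← ENNReal.ofReal_mul (mul_nonneg hTU hTV), c4, c2,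
    ← ENNReal.ofReal_mul (by norm_num : (0:ℝ) ≤ 4),
    ← ENNReal.ofReal_mul (by norm_num : (0:ℝ) ≤ 2),
    ← ENNReal.ofReal_mul (by norm_num : (0:ℝ) ≤ 2),
    ← ENNReal.ofReal_add (mul_nonneg hn1 hG) (mul_nonneg hn2 hG),
    ← ENNReal.ofReal_add (add_nonneg (mul_nonneg hn1 hG) (mul_nonneg hn2 hG))
      (by positivity),
    ← ENNReal.ofReal_add (by positivity) (by positivity)]
  congr 1
  linear_combination G * h

section mainaux
variable {Ω : Type*} [MeasurableSpace Ω] (ℙ : Measure Ω) [IsProbabilityMeasure ℙ]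
  {k : ℕ} (U V : Ω → Fin k → ℝ)

lemma measF (hU : Measurable U) (hV : Measurable V) (c α : ℝ) (s : Fin k → ℝ) :
    Measurable fun t : Fin k → ℝ => ENNReal.ofReal (‖(∫ ω, Complex.exp (Complex.I * ((∑ j, (s j * U ω j + t j * V ω j) : ℝ) : ℂ)) ∂ℙ) - (∫ ω, Complex.exp (Complex.I * ((∑ j, s j * U ω j : ℝ) : ℂ)) ∂ℙ) * (∫ ω, Complex.exp (Complex.I * ((∑ j, t j * V ω j : ℝ) : ℂ)) ∂ℙ)‖ ^ 2 * (gk k c α s * gk k c α t)) := by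
  have hAm : Measurable fun t : Fin k → ℝ => (∫ ω, Complex.exp (Complex.I * ((∑ j, (s j * U ω j + t j * V ω j) : ℝ) : ℂ)) ∂ℙ) := by
    have hsm : StronglyMeasurable fun p : (Fin k → ℝ) × Ω =>
        Complex.exp (Complex.I * ((∑ j, (s j * U p.2 j + p.1 j * V p.2 j) : ℝ) : ℂ)) :=
      (measurable_expi (Finset.measurable_sum _ fun j _ =>
        (measurable_const.mul ((hU.comp measurable_snd).eval)).add
          ((measurable_fst.eval).mul ((hV.comp measurable_snd).eval)))).stronglyMeasurable
    exact hsm.integral_prod_right'.measurable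
  have hDm : Measurable fun t : Fin k → ℝ => (∫ ω, Complex.exp (Complex.I * ((∑ j, t j * V ω j : ℝ) : ℂ)) ∂ℙ) := by
    have hsm : StronglyMeasurable fun p : (Fin k → ℝ) × Ω =>
        Complex.exp (Complex.I * ((∑ j, p.1 j * V p.2 j : ℝ) : ℂ)) :=
      (measurable_expi (Finset.measurable_sum _ fun j _ =>
        (measurable_fst.eval).mul ((hV.comp measurable_snd).eval))).stronglyMeasurable
    exact hsm.integral_prod_right'.measurable
  apply Measurable.ennreal_ofReal
  exact (((hAm.sub (hDm.const_mul _)).norm.pow_const 2).mul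
    (((measurable_gk c α).const_mul _)))

lemma measGgen {W : Type*} [MeasurableSpace W] (μ : Measure W) [SFinite μ]
    {X Y : W → Fin k → ℝ} (hX : Measurable X) (hY : Measurable Y) (c α : ℝ) :
    Measurable fun p : (Fin k → ℝ) × (Fin k → ℝ) =>
      (∫⁻ w, ENNReal.ofReal ((1 - Real.cos (∑ j, p.1 j * X w j))
          * (1 - Real.cos (∑ j, p.2 j * Y w j))) ∂μ)
        * ENNReal.ofReal (gk k c α p.1 * gk k c α p.2) := by
  apply Measurable.mul
  · refine Measurable.lintegral_prod_right'
      (f := fun q : ((Fin k → ℝ) × (Fin k → ℝ)) × W => ENNReal.ofReal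
        ((1 - Real.cos (∑ j, q.1.1 j * X q.2 j)) * (1 - Real.cos (∑ j, q.1.2 j * Y q.2 j)))) ?_
    apply Measurable.ennreal_ofReal
    apply Measurable.mul
    · exact measurable_const.sub (Real.measurable_cos.comp (Finset.measurable_sum _ fun j _ =>
        (((measurable_fst.comp measurable_fst).eval).mul ((hX.comp measurable_snd).eval))))
    · exact measurable_const.sub (Real.measurable_cos.comp (Finset.measurable_sum _ fun j _ =>
        (((measurable_snd.comp measurable_fst).eval).mul ((hY.comp measurable_snd).eval))))
  · exact (((measurable_gk c α).comp measurable_fst).mul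
      ((measurable_gk c α).comp measurable_snd)).ennreal_ofReal

lemma measGU {W : Type*} [MeasurableSpace W] (μ : Measure W) [SFinite μ]
    {X : W → Fin k → ℝ} (hX : Measurable X) :
    Measurable fun s : Fin k → ℝ => ∫⁻ w, ENNReal.ofReal (1 - Real.cos (∑ j, s j * X w j)) ∂μ := by
  refine Measurable.lintegral_prod_right'
    (f := fun q : (Fin k → ℝ) × W => ENNReal.ofReal (1 - Real.cos (∑ j, q.1 j * X q.2 j))) ?_
  apply Measurable.ennreal_ofReal
  exact measurable_const.sub (Real.measurable_cos.comp (Finset.measurable_sum _ fun j _ =>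
    ((measurable_fst.eval).mul ((hX.comp measurable_snd).eval))))

lemma measG2gen {W : Type*} [MeasurableSpace W] (μ : Measure W) [SFinite μ]
    {X Y : W → Fin k → ℝ} (hX : Measurable X) (hY : Measurable Y) (c α : ℝ) :
    Measurable fun p : (Fin k → ℝ) × (Fin k → ℝ) =>
      ((∫⁻ w, ENNReal.ofReal (1 - Real.cos (∑ j, p.1 j * X w j)) ∂μ)
          * ∫⁻ w, ENNReal.ofReal (1 - Real.cos (∑ j, p.2 j * Y w j)) ∂μ)
        * ENNReal.ofReal (gk k c α p.1 * gk k c α p.2) := by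
  apply Measurable.mul
  · exact ((measGU μ hX).comp measurable_fst).mul ((measGU μ hY).comp measurable_snd)
  · exact (((measurable_gk c α).comp measurable_fst).mul
      ((measurable_gk c α).comp measurable_snd)).ennreal_ofReal

end mainaux

lemma pkey {Ω : Type*} [MeasurableSpace Ω] (ℙ : Measure Ω) [IsProbabilityMeasure ℙ]
    {k : ℕ} (U V : Ω → Fin k → ℝ) (hU : Measurable U) (hV : Measurable V)
    {c α : ℝ} (hc : 0 ≤ c) (s t : Fin k → ℝ) :
    (ENNReal.ofReal (‖(∫ ω, Complex.exp (Complex.I * ((∑ j, (s j * U ω j + t j * V ω j) : ℝ) : ℂ)) ∂ℙ) - (∫ ω, Complex.exp (Complex.I * ((∑ j, s j * U ω j : ℝ) : ℂ)) ∂ℙ) * (∫ ω, Complex.exp (Complex.I * ((∑ j, t j * V ω j : ℝ) : ℂ)) ∂ℙ)‖ ^ 2 * (gk k c α s * gk k c α t))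
      + ENNReal.ofReal (‖(∫ ω, Complex.exp (Complex.I * ((∑ j, (s j * U ω j + (-t) j * V ω j) : ℝ) : ℂ)) ∂ℙ) - (∫ ω, Complex.exp (Complex.I * ((∑ j, s j * U ω j : ℝ) : ℂ)) ∂ℙ) * (∫ ω, Complex.exp (Complex.I * ((∑ j, (-t) j * V ω j : ℝ) : ℂ)) ∂ℙ)‖ ^ 2 * (gk k c α s * gk k c α (-t))))
      + 4 * ((∫⁻ w : Ω × Ω × Ω, ENNReal.ofReal ((1 - Real.cos (∑ j, s j * (U w.1 j - U w.2.1 j))) * (1 - Real.cos (∑ j, t j * (V w.1 j - V w.2.2 j)))) ∂(ℙ.prod (ℙ.prod ℙ))) * ENNReal.ofReal (gk k c α s * gk k c α t))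
    = 2 * ((∫⁻ w : Ω × Ω, ENNReal.ofReal ((1 - Real.cos (∑ j, s j * (U w.1 j - U w.2 j))) * (1 - Real.cos (∑ j, t j * (V w.1 j - V w.2 j)))) ∂(ℙ.prod ℙ)) * ENNReal.ofReal (gk k c α s * gk k c α t))
      + 2 * (((∫⁻ w : Ω × Ω, ENNReal.ofReal (1 - Real.cos (∑ j, s j * (U w.1 j - U w.2 j))) ∂(ℙ.prod ℙ)) * (∫⁻ w : Ω × Ω, ENNReal.ofReal (1 - Real.cos (∑ j, t j * (V w.1 j - V w.2 j))) ∂(ℙ.prod ℙ))) * ENNReal.ofReal (gk k c α s * gk k c α t)) := by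
  have hθm : Measurable fun ω => ∑ j, s j * U ω j :=
    Finset.measurable_sum _ fun j _ => measurable_const.mul (hU.eval)
  have hηm : Measurable fun ω => ∑ j, t j * V ω j :=
    Finset.measurable_sum _ fun j _ => measurable_const.mul (hV.eval)
  have chr := char ℙ hθm hηm
  beta_reduce at chr
  have hA : (∫ ω, Complex.exp (Complex.I * ((∑ j, (s j * U ω j + t j * V ω j) : ℝ) : ℂ)) ∂ℙ)
      = ∫ ω, Complex.exp (Complex.I * ((∑ j, s j * U ω j + ∑ j, t j * V ω j : ℝ) : ℂ)) ∂ℙ :=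
    integral_congr_ae (ae_of_all _ fun ω => by beta_reduce; rw [Finset.sum_add_distrib])
  have hA' : (∫ ω, Complex.exp (Complex.I * ((∑ j, (s j * U ω j + (-t) j * V ω j) : ℝ) : ℂ)) ∂ℙ)
      = ∫ ω, Complex.exp (Complex.I * ((∑ j, s j * U ω j - ∑ j, t j * V ω j : ℝ) : ℂ)) ∂ℙ := by
    refine integral_congr_ae (ae_of_all _ fun ω => ?_)
    beta_reduce
    congr 2
    have key : ∑ j, ((-t) j * V ω j) = -∑ j, t j * V ω j := by
      rw [← Finset.sum_neg_distrib]
      exact Finset.sum_congr rfl fun j _ => by simp only [Pi.neg_apply]; ring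
    rw [Finset.sum_add_distrib, key, ← sub_eq_add_neg]
  have hD' : (∫ ω, Complex.exp (Complex.I * ((∑ j, (-t) j * V ω j : ℝ) : ℂ)) ∂ℙ)
      = ∫ ω, Complex.exp (Complex.I * ((-(∑ j, t j * V ω j) : ℝ) : ℂ)) ∂ℙ := by
    refine integral_congr_ae (ae_of_all _ fun ω => ?_)
    beta_reduce
    congr 2
    have key : ∑ j, ((-t) j * V ω j) = -∑ j, t j * V ω j := by
      rw [← Finset.sum_neg_distrib]
      exact Finset.sum_congr rfl fun j _ => by simp only [Pi.neg_apply]; ring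
    rw [key]
  have hgneg : gk k c α (-t) = gk k c α t := gk_neg c α t
  have hmcos2U : Measurable fun z : Ω × Ω => ∑ j, s j * U z.1 j - ∑ j, s j * U z.2 j :=
    (hθm.comp measurable_fst).sub (hθm.comp measurable_snd)
  have hmcos2V : Measurable fun z : Ω × Ω => ∑ j, t j * V z.1 j - ∑ j, t j * V z.2 j :=
    (hηm.comp measurable_fst).sub (hηm.comp measurable_snd)
  have hmcos3U : Measurable fun z : Ω × Ω × Ω => ∑ j, s j * U z.1 j - ∑ j, s j * U z.2.1 j :=
    (hθm.comp measurable_fst).sub (hθm.comp (measurable_fst.comp measurable_snd))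
  have hmcos3V : Measurable fun z : Ω × Ω × Ω => ∑ j, t j * V z.1 j - ∑ j, t j * V z.2.2 j :=
    (hηm.comp measurable_fst).sub (hηm.comp (measurable_snd.comp measurable_snd))
  have hX2 : ∀ x y : Ω, (∑ j, s j * (U x j - U y j)) = ∑ j, s j * U x j - ∑ j, s j * U y j := by
    intro x y
    rw [← Finset.sum_sub_distrib]
    exact Finset.sum_congr rfl fun j _ => by ring
  have hY2 : ∀ x y : Ω, (∑ j, t j * (V x j - V y j)) = ∑ j, t j * V x j - ∑ j, t j * V y j := by
    intro x y
    rw [← Finset.sum_sub_distrib]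
    exact Finset.sum_congr rfl fun j _ => by ring
  have bT1 : (∫⁻ w : Ω × Ω, ENNReal.ofReal ((1 - Real.cos (∑ j, s j * (U w.1 j - U w.2 j))) * (1 - Real.cos (∑ j, t j * (V w.1 j - V w.2 j)))) ∂(ℙ.prod ℙ))
      = ENNReal.ofReal (∫ z : Ω × Ω,
          (1 - Real.cos (∑ j, s j * U z.1 j - ∑ j, s j * U z.2 j))
            * (1 - Real.cos (∑ j, t j * V z.1 j - ∑ j, t j * V z.2 j)) ∂(ℙ.prod ℙ)) := by
    have i1 : Integrable (fun z : Ω × Ω =>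
        (1 - Real.cos (∑ j, s j * U z.1 j - ∑ j, s j * U z.2 j))
          * (1 - Real.cos (∑ j, t j * V z.1 j - ∑ j, t j * V z.2 j))) (ℙ.prod ℙ) :=
      integrable_of_bdd ((measurable_const.sub (Real.measurable_cos.comp hmcos2U)).mul
        (measurable_const.sub (Real.measurable_cos.comp hmcos2V))) 4
        (fun z => abs_one_sub_cos_mul_le _ _)
    rw [ofReal_integral_eq_lintegral_ofReal i1
      (ae_of_all _ fun z => mul_nonneg (one_sub_cos_nonneg _) (one_sub_cos_nonneg _))]
    exact lintegral_congr fun w => by rw [hX2 w.1 w.2, hY2 w.1 w.2]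
  have bT3 : (∫⁻ w : Ω × Ω × Ω, ENNReal.ofReal ((1 - Real.cos (∑ j, s j * (U w.1 j - U w.2.1 j))) * (1 - Real.cos (∑ j, t j * (V w.1 j - V w.2.2 j)))) ∂(ℙ.prod (ℙ.prod ℙ)))
      = ENNReal.ofReal (∫ z : Ω × Ω × Ω,
          (1 - Real.cos (∑ j, s j * U z.1 j - ∑ j, s j * U z.2.1 j))
            * (1 - Real.cos (∑ j, t j * V z.1 j - ∑ j, t j * V z.2.2 j)) ∂(ℙ.prod (ℙ.prod ℙ))) := by
    have i3 : Integrable (fun z : Ω × Ω × Ω =>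
        (1 - Real.cos (∑ j, s j * U z.1 j - ∑ j, s j * U z.2.1 j))
          * (1 - Real.cos (∑ j, t j * V z.1 j - ∑ j, t j * V z.2.2 j))) (ℙ.prod (ℙ.prod ℙ)) :=
      integrable_of_bdd ((measurable_const.sub (Real.measurable_cos.comp hmcos3U)).mul
        (measurable_const.sub (Real.measurable_cos.comp hmcos3V))) 4
        (fun z => abs_one_sub_cos_mul_le _ _)
    rw [ofReal_integral_eq_lintegral_ofReal i3
      (ae_of_all _ fun z => mul_nonneg (one_sub_cos_nonneg _) (one_sub_cos_nonneg _))]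
    exact lintegral_congr fun w => by rw [hX2 w.1 w.2.1, hY2 w.1 w.2.2]
  have bTU : (∫⁻ w : Ω × Ω, ENNReal.ofReal (1 - Real.cos (∑ j, s j * (U w.1 j - U w.2 j))) ∂(ℙ.prod ℙ))
      = ENNReal.ofReal (∫ z : Ω × Ω,
          (1 - Real.cos (∑ j, s j * U z.1 j - ∑ j, s j * U z.2 j)) ∂(ℙ.prod ℙ)) := by
    have iU : Integrable (fun z : Ω × Ω =>
        (1 - Real.cos (∑ j, s j * U z.1 j - ∑ j, s j * U z.2 j))) (ℙ.prod ℙ) :=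
      integrable_of_bdd (measurable_const.sub (Real.measurable_cos.comp hmcos2U)) 2
        (fun z => abs_one_sub_cos_le_two _)
    rw [ofReal_integral_eq_lintegral_ofReal iU (ae_of_all _ fun z => one_sub_cos_nonneg _)]
    exact lintegral_congr fun w => by rw [hX2 w.1 w.2]
  have bTV : (∫⁻ w : Ω × Ω, ENNReal.ofReal (1 - Real.cos (∑ j, t j * (V w.1 j - V w.2 j))) ∂(ℙ.prod ℙ))
      = ENNReal.ofReal (∫ z : Ω × Ω,
          (1 - Real.cos (∑ j, t j * V z.1 j - ∑ j, t j * V z.2 j)) ∂(ℙ.prod ℙ)) := by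
    have iV : Integrable (fun z : Ω × Ω =>
        (1 - Real.cos (∑ j, t j * V z.1 j - ∑ j, t j * V z.2 j))) (ℙ.prod ℙ) :=
      integrable_of_bdd (measurable_const.sub (Real.measurable_cos.comp hmcos2V)) 2
        (fun z => abs_one_sub_cos_le_two _)
    rw [ofReal_integral_eq_lintegral_ofReal iV (ae_of_all _ fun z => one_sub_cos_nonneg _)]
    exact lintegral_congr fun w => by rw [hY2 w.1 w.2]
  rw [hA, hA', hD', hgneg, bT1, bT3, bTU, bTV]
  exact ofReal_comb (by positivity) (by positivity)
    (integral_nonneg fun z => mul_nonneg (one_sub_cos_nonneg _) (one_sub_cos_nonneg _))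
    (integral_nonneg fun z => mul_nonneg (one_sub_cos_nonneg _) (one_sub_cos_nonneg _))
    (integral_nonneg fun z => one_sub_cos_nonneg _)
    (integral_nonneg fun z => one_sub_cos_nonneg _)
    (mul_nonneg (gk_nonneg hc α s) (gk_nonneg hc α t)) chr

end DCovAux

/-- For `α ∈ (0,2)` and the weight `g_k(s) = c_k |s|^{−k−α}` normalized
so that `∫ (1 − cos⟨s,x⟩) g_k(s) ds = |x|^α`, and random vectors `U, V : Ω → ℝ^k` with
finite `α`-moments (`E|U|^α, E|V|^α, E[|U|^α|V|^α] < ∞`), one has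
`∫∫ |φ_{U,V}(s,t) − φ_U(s)φ_V(t)|² g_k(s)g_k(t) ds dt
 = E[|U−U'|^α |V−V'|^α] + E[|U−U'|^α] E[|V−V'|^α] − 2 E[|U−U'|^α |V−V''|^α]`,
with all expectations on the right-hand side finite; here `(U',V')` is an independent
copy of `(U,V)` and `V''` an independent copy of `V`, realized by product coordinates,
and `|y|^α = (Σ_j y_j²)^{α/2}` is the `α`-th power of the Euclidean norm. -/
theorem distCovariance_alpha_representation
    {Ω : Type*} [MeasurableSpace Ω] (ℙ : Measure Ω) [IsProbabilityMeasure ℙ]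
    {k : ℕ} (hk : 1 ≤ k) (α : ℝ) (hα : α ∈ Set.Ioo 0 2)
    (c : ℝ) (hc : 0 < c)
    (hc_norm : ∀ x : Fin k → ℝ,
      (∫⁻ (s : Fin k → ℝ),
          ENNReal.ofReal
            ((1 - Real.cos (∑ j, s j * x j)) *
              (c * (∑ j, s j ^ 2) ^ ((-((k : ℝ) + α)) / 2))))
        = ENNReal.ofReal ((∑ j, x j ^ 2) ^ (α / 2)))
    (U V : Ω → (Fin k → ℝ)) (hU : Measurable U) (hV : Measurable V)
    (hUα : Integrable (fun ω => (∑ j, U ω j ^ 2) ^ (α / 2)) ℙ)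
    (hVα : Integrable (fun ω => (∑ j, V ω j ^ 2) ^ (α / 2)) ℙ)
    (hUVα : Integrable (fun ω => (∑ j, U ω j ^ 2) ^ (α / 2) * (∑ j, V ω j ^ 2) ^ (α / 2)) ℙ) :
    Integrable (fun ω : Ω × Ω =>
        (∑ j, (U ω.1 j - U ω.2 j) ^ 2) ^ (α / 2) *
          (∑ j, (V ω.1 j - V ω.2 j) ^ 2) ^ (α / 2)) (ℙ.prod ℙ) ∧
    Integrable (fun ω : Ω × Ω => (∑ j, (U ω.1 j - U ω.2 j) ^ 2) ^ (α / 2)) (ℙ.prod ℙ) ∧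
    Integrable (fun ω : Ω × Ω => (∑ j, (V ω.1 j - V ω.2 j) ^ 2) ^ (α / 2)) (ℙ.prod ℙ) ∧
    Integrable (fun ω : Ω × Ω × Ω =>
        (∑ j, (U ω.1 j - U ω.2.1 j) ^ 2) ^ (α / 2) *
          (∑ j, (V ω.1 j - V ω.2.2 j) ^ 2) ^ (α / 2)) (ℙ.prod (ℙ.prod ℙ)) ∧
    (∫⁻ (s : Fin k → ℝ), ∫⁻ (t : Fin k → ℝ),
        ENNReal.ofReal
          (‖(∫ ω, Complex.exp (Complex.I *
                ((∑ j, (s j * U ω j + t j * V ω j) : ℝ) : ℂ)) ∂ℙ) -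
              (∫ ω, Complex.exp (Complex.I * ((∑ j, s j * U ω j : ℝ) : ℂ)) ∂ℙ) *
              (∫ ω, Complex.exp (Complex.I * ((∑ j, t j * V ω j : ℝ) : ℂ)) ∂ℙ)‖ ^ 2 *
            ((c * (∑ j, s j ^ 2) ^ ((-((k : ℝ) + α)) / 2)) *
              (c * (∑ j, t j ^ 2) ^ ((-((k : ℝ) + α)) / 2)))))
      = ENNReal.ofReal
          ((∫ ω : Ω × Ω,
              (∑ j, (U ω.1 j - U ω.2 j) ^ 2) ^ (α / 2) *
                (∑ j, (V ω.1 j - V ω.2 j) ^ 2) ^ (α / 2) ∂(ℙ.prod ℙ))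
            + (∫ ω : Ω × Ω, (∑ j, (U ω.1 j - U ω.2 j) ^ 2) ^ (α / 2) ∂(ℙ.prod ℙ)) *
              (∫ ω : Ω × Ω, (∑ j, (V ω.1 j - V ω.2 j) ^ 2) ^ (α / 2) ∂(ℙ.prod ℙ))
            - 2 * ∫ ω : Ω × Ω × Ω,
                (∑ j, (U ω.1 j - U ω.2.1 j) ^ 2) ^ (α / 2) *
                  (∑ j, (V ω.1 j - V ω.2.2 j) ^ 2) ^ (α / 2) ∂(ℙ.prod (ℙ.prod ℙ))) := by
  obtain ⟨hα0, hα2⟩ := hα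
  have hαle : (0:ℝ) ≤ α := le_of_lt hα0
  have hUαn : Integrable (fun ω => DCovAux.nrm α (U ω)) ℙ := hUα
  have hVαn : Integrable (fun ω => DCovAux.nrm α (V ω)) ℙ := hVα
  have hUVαn : Integrable (fun ω => DCovAux.nrm α (U ω) * DCovAux.nrm α (V ω)) ℙ := hUVα
  have I1 : Integrable (fun ω : Ω × Ω =>
      DCovAux.nrm α (U ω.1 - U ω.2) * DCovAux.nrm α (V ω.1 - V ω.2)) (ℙ.prod ℙ) :=
    DCovAux.integrable1 hαle hU hV hUαn hVαn hUVαn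
  have IU : Integrable (fun ω : Ω × Ω => DCovAux.nrm α (U ω.1 - U ω.2)) (ℙ.prod ℙ) :=
    DCovAux.integrable2 hαle hU hUαn
  have IV : Integrable (fun ω : Ω × Ω => DCovAux.nrm α (V ω.1 - V ω.2)) (ℙ.prod ℙ) :=
    DCovAux.integrable2 hαle hV hVαn
  have I3 : Integrable (fun ω : Ω × Ω × Ω =>
      DCovAux.nrm α (U ω.1 - U ω.2.1) * DCovAux.nrm α (V ω.1 - V ω.2.2)) (ℙ.prod (ℙ.prod ℙ)) :=
    DCovAux.integrable3 hαle hU hV hUαn hVαn hUVαn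
  refine ⟨I1, IU, IV, I3, ?_⟩
  have hn1 : ∀ x y : Fin k → ℝ,
      (∑ j, (x j - y j) ^ 2) ^ (α / 2) = DCovAux.nrm α (x - y) := fun _ _ => rfl
  have hgk : ∀ s : Fin k → ℝ,
      (c * (∑ j, s j ^ 2) ^ ((-((k : ℝ) + α)) / 2)) = DCovAux.gk k c α s := fun _ => rfl
  simp only [hn1, hgk]
  have hcg : ∀ x : Fin k → ℝ,
      (∫⁻ s : Fin k → ℝ, ENNReal.ofReal
        ((1 - Real.cos (∑ j, s j * x j)) * DCovAux.gk k c α s))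
      = ENNReal.ofReal (DCovAux.nrm α x) := hc_norm
  -- measurability of the difference maps
  have hX2m : Measurable fun w : Ω × Ω => U w.1 - U w.2 :=
    (hU.comp measurable_fst).sub (hU.comp measurable_snd)
  have hY2m : Measurable fun w : Ω × Ω => V w.1 - V w.2 :=
    (hV.comp measurable_fst).sub (hV.comp measurable_snd)
  have hX3m : Measurable fun w : Ω × Ω × Ω => U w.1 - U w.2.1 :=
    (hU.comp measurable_fst).sub (hU.comp (measurable_fst.comp measurable_snd))
  have hY3m : Measurable fun w : Ω × Ω × Ω => V w.1 - V w.2.2 :=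
    (hV.comp measurable_fst).sub (hV.comp (measurable_snd.comp measurable_snd))
  -- core computations
  have hJ1 : (∫⁻ s : Fin k → ℝ, ∫⁻ t : Fin k → ℝ, (∫⁻ w : Ω × Ω, ENNReal.ofReal ((1 - Real.cos (∑ j, s j * (U w.1 j - U w.2 j))) * (1 - Real.cos (∑ j, t j * (V w.1 j - V w.2 j)))) ∂(ℙ.prod ℙ)) * ENNReal.ofReal (DCovAux.gk k c α s * DCovAux.gk k c α t))
      = ENNReal.ofReal (∫ ω : Ω × Ω, DCovAux.nrm α (U ω.1 - U ω.2) * DCovAux.nrm α (V ω.1 - V ω.2) ∂(ℙ.prod ℙ)) :=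
    DCovAux.core (ℙ.prod ℙ) hX2m hY2m hcg hc.le I1
  have hJ3 : (∫⁻ s : Fin k → ℝ, ∫⁻ t : Fin k → ℝ, (∫⁻ w : Ω × Ω × Ω, ENNReal.ofReal ((1 - Real.cos (∑ j, s j * (U w.1 j - U w.2.1 j))) * (1 - Real.cos (∑ j, t j * (V w.1 j - V w.2.2 j)))) ∂(ℙ.prod (ℙ.prod ℙ))) * ENNReal.ofReal (DCovAux.gk k c α s * DCovAux.gk k c α t))
      = ENNReal.ofReal (∫ ω : Ω × Ω × Ω, DCovAux.nrm α (U ω.1 - U ω.2.1) * DCovAux.nrm α (V ω.1 - V ω.2.2) ∂(ℙ.prod (ℙ.prod ℙ))) :=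
    DCovAux.core (ℙ.prod (ℙ.prod ℙ)) hX3m hY3m hcg hc.le I3
  have hJU : (∫⁻ s : Fin k → ℝ, (∫⁻ w : Ω × Ω, ENNReal.ofReal (1 - Real.cos (∑ j, s j * (U w.1 j - U w.2 j))) ∂(ℙ.prod ℙ)) * ENNReal.ofReal (DCovAux.gk k c α s))
      = ENNReal.ofReal (∫ ω : Ω × Ω, DCovAux.nrm α (U ω.1 - U ω.2) ∂(ℙ.prod ℙ)) :=
    DCovAux.core1 (ℙ.prod ℙ) hX2m hcg hc.le IU
  have hJV : (∫⁻ t : Fin k → ℝ, (∫⁻ w : Ω × Ω, ENNReal.ofReal (1 - Real.cos (∑ j, t j * (V w.1 j - V w.2 j))) ∂(ℙ.prod ℙ)) * ENNReal.ofReal (DCovAux.gk k c α t))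
      = ENNReal.ofReal (∫ ω : Ω × Ω, DCovAux.nrm α (V ω.1 - V ω.2) ∂(ℙ.prod ℙ)) :=
    DCovAux.core1 (ℙ.prod ℙ) hY2m hcg hc.le IV
  -- measurability facts
  have mF : ∀ s : Fin k → ℝ, Measurable fun t : Fin k → ℝ => ENNReal.ofReal (‖(∫ ω, Complex.exp (Complex.I * ((∑ j, (s j * U ω j + t j * V ω j) : ℝ) : ℂ)) ∂ℙ) - (∫ ω, Complex.exp (Complex.I * ((∑ j, s j * U ω j : ℝ) : ℂ)) ∂ℙ) * (∫ ω, Complex.exp (Complex.I * ((∑ j, t j * V ω j : ℝ) : ℂ)) ∂ℙ)‖ ^ 2 * (DCovAux.gk k c α s * DCovAux.gk k c α t)) :=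
    fun s => DCovAux.measF ℙ U V hU hV c α s
  have mG1 : Measurable fun p : (Fin k → ℝ) × (Fin k → ℝ) =>
      (∫⁻ w : Ω × Ω, ENNReal.ofReal ((1 - Real.cos (∑ j, p.1 j * (U w.1 j - U w.2 j))) * (1 - Real.cos (∑ j, p.2 j * (V w.1 j - V w.2 j)))) ∂(ℙ.prod ℙ)) * ENNReal.ofReal (DCovAux.gk k c α p.1 * DCovAux.gk k c α p.2) :=
    DCovAux.measGgen (ℙ.prod ℙ) hX2m hY2m c α
  have mG3 : Measurable fun p : (Fin k → ℝ) × (Fin k → ℝ) =>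
      (∫⁻ w : Ω × Ω × Ω, ENNReal.ofReal ((1 - Real.cos (∑ j, p.1 j * (U w.1 j - U w.2.1 j))) * (1 - Real.cos (∑ j, p.2 j * (V w.1 j - V w.2.2 j)))) ∂(ℙ.prod (ℙ.prod ℙ))) * ENNReal.ofReal (DCovAux.gk k c α p.1 * DCovAux.gk k c α p.2) :=
    DCovAux.measGgen (ℙ.prod (ℙ.prod ℙ)) hX3m hY3m c α
  have mG2 : Measurable fun p : (Fin k → ℝ) × (Fin k → ℝ) =>
      ((∫⁻ w : Ω × Ω, ENNReal.ofReal (1 - Real.cos (∑ j, p.1 j * (U w.1 j - U w.2 j))) ∂(ℙ.prod ℙ)) * (∫⁻ w : Ω × Ω, ENNReal.ofReal (1 - Real.cos (∑ j, p.2 j * (V w.1 j - V w.2 j))) ∂(ℙ.prod ℙ))) * ENNReal.ofReal (DCovAux.gk k c α p.1 * DCovAux.gk k c α p.2) :=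
    DCovAux.measG2gen (ℙ.prod ℙ) hX2m hY2m c α
  -- symmetrization
  have hsym : 2 * (∫⁻ s : Fin k → ℝ, ∫⁻ t : Fin k → ℝ, ENNReal.ofReal (‖(∫ ω, Complex.exp (Complex.I * ((∑ j, (s j * U ω j + t j * V ω j) : ℝ) : ℂ)) ∂ℙ) - (∫ ω, Complex.exp (Complex.I * ((∑ j, s j * U ω j : ℝ) : ℂ)) ∂ℙ) * (∫ ω, Complex.exp (Complex.I * ((∑ j, t j * V ω j : ℝ) : ℂ)) ∂ℙ)‖ ^ 2 * (DCovAux.gk k c α s * DCovAux.gk k c α t)))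
      = ∫⁻ s : Fin k → ℝ, ∫⁻ t : Fin k → ℝ, (ENNReal.ofReal (‖(∫ ω, Complex.exp (Complex.I * ((∑ j, (s j * U ω j + t j * V ω j) : ℝ) : ℂ)) ∂ℙ) - (∫ ω, Complex.exp (Complex.I * ((∑ j, s j * U ω j : ℝ) : ℂ)) ∂ℙ) * (∫ ω, Complex.exp (Complex.I * ((∑ j, t j * V ω j : ℝ) : ℂ)) ∂ℙ)‖ ^ 2 * (DCovAux.gk k c α s * DCovAux.gk k c α t)) + ENNReal.ofReal (‖(∫ ω, Complex.exp (Complex.I * ((∑ j, (s j * U ω j + (-t) j * V ω j) : ℝ) : ℂ)) ∂ℙ) - (∫ ω, Complex.exp (Complex.I * ((∑ j, s j * U ω j : ℝ) : ℂ)) ∂ℙ) * (∫ ω, Complex.exp (Complex.I * ((∑ j, (-t) j * V ω j : ℝ) : ℂ)) ∂ℙ)‖ ^ 2 * (DCovAux.gk k c α s * DCovAux.gk k c α (-t)))) := by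
    rw [← lintegral_const_mul' 2 _ (by norm_num)]
    refine lintegral_congr fun s => ?_
    have hnegt : (∫⁻ t : Fin k → ℝ, ENNReal.ofReal (‖(∫ ω, Complex.exp (Complex.I * ((∑ j, (s j * U ω j + t j * V ω j) : ℝ) : ℂ)) ∂ℙ) - (∫ ω, Complex.exp (Complex.I * ((∑ j, s j * U ω j : ℝ) : ℂ)) ∂ℙ) * (∫ ω, Complex.exp (Complex.I * ((∑ j, t j * V ω j : ℝ) : ℂ)) ∂ℙ)‖ ^ 2 * (DCovAux.gk k c α s * DCovAux.gk k c α t))) = ∫⁻ t : Fin k → ℝ, ENNReal.ofReal (‖(∫ ω, Complex.exp (Complex.I * ((∑ j, (s j * U ω j + (-t) j * V ω j) : ℝ) : ℂ)) ∂ℙ) - (∫ ω, Complex.exp (Complex.I * ((∑ j, s j * U ω j : ℝ) : ℂ)) ∂ℙ) * (∫ ω, Complex.exp (Complex.I * ((∑ j, (-t) j * V ω j : ℝ) : ℂ)) ∂ℙ)‖ ^ 2 * (DCovAux.gk k c α s * DCovAux.gk k c α (-t))) :=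
      (DCovAux.lintegral_neg_pi (fun t : Fin k → ℝ => ENNReal.ofReal (‖(∫ ω, Complex.exp (Complex.I * ((∑ j, (s j * U ω j + t j * V ω j) : ℝ) : ℂ)) ∂ℙ) - (∫ ω, Complex.exp (Complex.I * ((∑ j, s j * U ω j : ℝ) : ℂ)) ∂ℙ) * (∫ ω, Complex.exp (Complex.I * ((∑ j, t j * V ω j : ℝ) : ℂ)) ∂ℙ)‖ ^ 2 * (DCovAux.gk k c α s * DCovAux.gk k c α t)))).symm
    calc 2 * ∫⁻ t : Fin k → ℝ, ENNReal.ofReal (‖(∫ ω, Complex.exp (Complex.I * ((∑ j, (s j * U ω j + t j * V ω j) : ℝ) : ℂ)) ∂ℙ) - (∫ ω, Complex.exp (Complex.I * ((∑ j, s j * U ω j : ℝ) : ℂ)) ∂ℙ) * (∫ ω, Complex.exp (Complex.I * ((∑ j, t j * V ω j : ℝ) : ℂ)) ∂ℙ)‖ ^ 2 * (DCovAux.gk k c α s * DCovAux.gk k c α t))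
        = (∫⁻ t : Fin k → ℝ, ENNReal.ofReal (‖(∫ ω, Complex.exp (Complex.I * ((∑ j, (s j * U ω j + t j * V ω j) : ℝ) : ℂ)) ∂ℙ) - (∫ ω, Complex.exp (Complex.I * ((∑ j, s j * U ω j : ℝ) : ℂ)) ∂ℙ) * (∫ ω, Complex.exp (Complex.I * ((∑ j, t j * V ω j : ℝ) : ℂ)) ∂ℙ)‖ ^ 2 * (DCovAux.gk k c α s * DCovAux.gk k c α t))) + ∫⁻ t : Fin k → ℝ, ENNReal.ofReal (‖(∫ ω, Complex.exp (Complex.I * ((∑ j, (s j * U ω j + t j * V ω j) : ℝ) : ℂ)) ∂ℙ) - (∫ ω, Complex.exp (Complex.I * ((∑ j, s j * U ω j : ℝ) : ℂ)) ∂ℙ) * (∫ ω, Complex.exp (Complex.I * ((∑ j, t j * V ω j : ℝ) : ℂ)) ∂ℙ)‖ ^ 2 * (DCovAux.gk k c α s * DCovAux.gk k c α t)) := two_mul _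
      _ = (∫⁻ t : Fin k → ℝ, ENNReal.ofReal (‖(∫ ω, Complex.exp (Complex.I * ((∑ j, (s j * U ω j + t j * V ω j) : ℝ) : ℂ)) ∂ℙ) - (∫ ω, Complex.exp (Complex.I * ((∑ j, s j * U ω j : ℝ) : ℂ)) ∂ℙ) * (∫ ω, Complex.exp (Complex.I * ((∑ j, t j * V ω j : ℝ) : ℂ)) ∂ℙ)‖ ^ 2 * (DCovAux.gk k c α s * DCovAux.gk k c α t))) + ∫⁻ t : Fin k → ℝ, ENNReal.ofReal (‖(∫ ω, Complex.exp (Complex.I * ((∑ j, (s j * U ω j + (-t) j * V ω j) : ℝ) : ℂ)) ∂ℙ) - (∫ ω, Complex.exp (Complex.I * ((∑ j, s j * U ω j : ℝ) : ℂ)) ∂ℙ) * (∫ ω, Complex.exp (Complex.I * ((∑ j, (-t) j * V ω j : ℝ) : ℂ)) ∂ℙ)‖ ^ 2 * (DCovAux.gk k c α s * DCovAux.gk k c α (-t))) := by rw [← hnegt]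
      _ = ∫⁻ t : Fin k → ℝ, (ENNReal.ofReal (‖(∫ ω, Complex.exp (Complex.I * ((∑ j, (s j * U ω j + t j * V ω j) : ℝ) : ℂ)) ∂ℙ) - (∫ ω, Complex.exp (Complex.I * ((∑ j, s j * U ω j : ℝ) : ℂ)) ∂ℙ) * (∫ ω, Complex.exp (Complex.I * ((∑ j, t j * V ω j : ℝ) : ℂ)) ∂ℙ)‖ ^ 2 * (DCovAux.gk k c α s * DCovAux.gk k c α t)) + ENNReal.ofReal (‖(∫ ω, Complex.exp (Complex.I * ((∑ j, (s j * U ω j + (-t) j * V ω j) : ℝ) : ℂ)) ∂ℙ) - (∫ ω, Complex.exp (Complex.I * ((∑ j, s j * U ω j : ℝ) : ℂ)) ∂ℙ) * (∫ ω, Complex.exp (Complex.I * ((∑ j, (-t) j * V ω j : ℝ) : ℂ)) ∂ℙ)‖ ^ 2 * (DCovAux.gk k c α s * DCovAux.gk k c α (-t)))) := (lintegral_add_left (mF s) _).symm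
  -- pointwise key identity
  have pk : ∀ s t : Fin k → ℝ,
      (ENNReal.ofReal (‖(∫ ω, Complex.exp (Complex.I * ((∑ j, (s j * U ω j + t j * V ω j) : ℝ) : ℂ)) ∂ℙ) - (∫ ω, Complex.exp (Complex.I * ((∑ j, s j * U ω j : ℝ) : ℂ)) ∂ℙ) * (∫ ω, Complex.exp (Complex.I * ((∑ j, t j * V ω j : ℝ) : ℂ)) ∂ℙ)‖ ^ 2 * (DCovAux.gk k c α s * DCovAux.gk k c α t)) + ENNReal.ofReal (‖(∫ ω, Complex.exp (Complex.I * ((∑ j, (s j * U ω j + (-t) j * V ω j) : ℝ) : ℂ)) ∂ℙ) - (∫ ω, Complex.exp (Complex.I * ((∑ j, s j * U ω j : ℝ) : ℂ)) ∂ℙ) * (∫ ω, Complex.exp (Complex.I * ((∑ j, (-t) j * V ω j : ℝ) : ℂ)) ∂ℙ)‖ ^ 2 * (DCovAux.gk k c α s * DCovAux.gk k c α (-t))))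
        + 4 * ((∫⁻ w : Ω × Ω × Ω, ENNReal.ofReal ((1 - Real.cos (∑ j, s j * (U w.1 j - U w.2.1 j))) * (1 - Real.cos (∑ j, t j * (V w.1 j - V w.2.2 j)))) ∂(ℙ.prod (ℙ.prod ℙ))) * ENNReal.ofReal (DCovAux.gk k c α s * DCovAux.gk k c α t))
      = 2 * ((∫⁻ w : Ω × Ω, ENNReal.ofReal ((1 - Real.cos (∑ j, s j * (U w.1 j - U w.2 j))) * (1 - Real.cos (∑ j, t j * (V w.1 j - V w.2 j)))) ∂(ℙ.prod ℙ)) * ENNReal.ofReal (DCovAux.gk k c α s * DCovAux.gk k c α t))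
        + 2 * (((∫⁻ w : Ω × Ω, ENNReal.ofReal (1 - Real.cos (∑ j, s j * (U w.1 j - U w.2 j))) ∂(ℙ.prod ℙ)) * (∫⁻ w : Ω × Ω, ENNReal.ofReal (1 - Real.cos (∑ j, t j * (V w.1 j - V w.2 j))) ∂(ℙ.prod ℙ))) * ENNReal.ofReal (DCovAux.gk k c α s * DCovAux.gk k c α t)) :=
    fun s t => DCovAux.pkey ℙ U V hU hV hc.le s t
  -- finiteness of GU
  have hGUfin : ∀ s : Fin k → ℝ, (∫⁻ w : Ω × Ω, ENNReal.ofReal (1 - Real.cos (∑ j, s j * (U w.1 j - U w.2 j))) ∂(ℙ.prod ℙ)) ≠ ⊤ := by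
    intro s
    have hle : (∫⁻ w : Ω × Ω, ENNReal.ofReal (1 - Real.cos (∑ j, s j * (U w.1 j - U w.2 j))) ∂(ℙ.prod ℙ)) ≤ 2 := by
      have : ∀ w : Ω × Ω,
          ENNReal.ofReal (1 - Real.cos (∑ j, s j * (U w.1 j - U w.2 j))) ≤ 2 := by
        intro w
        rw [show (2:ℝ≥0∞) = ENNReal.ofReal (2:ℝ) by norm_num]
        exact ENNReal.ofReal_le_ofReal
          (by nlinarith [Real.neg_one_le_cos (∑ j, s j * (U w.1 j - U w.2 j))])
      calc (∫⁻ w : Ω × Ω, ENNReal.ofReal (1 - Real.cos (∑ j, s j * (U w.1 j - U w.2 j))) ∂(ℙ.prod ℙ)) ≤ ∫⁻ _ : Ω × Ω, 2 ∂(ℙ.prod ℙ) := lintegral_mono this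
        _ = 2 := by simp
    exact (lt_of_le_of_lt hle (by norm_num)).ne
  -- J2 computation
  have hJ2 : (∫⁻ s : Fin k → ℝ, ∫⁻ t : Fin k → ℝ, ((∫⁻ w : Ω × Ω, ENNReal.ofReal (1 - Real.cos (∑ j, s j * (U w.1 j - U w.2 j))) ∂(ℙ.prod ℙ)) * (∫⁻ w : Ω × Ω, ENNReal.ofReal (1 - Real.cos (∑ j, t j * (V w.1 j - V w.2 j))) ∂(ℙ.prod ℙ))) * ENNReal.ofReal (DCovAux.gk k c α s * DCovAux.gk k c α t))
      = ENNReal.ofReal ((∫ ω : Ω × Ω, DCovAux.nrm α (U ω.1 - U ω.2) ∂(ℙ.prod ℙ)) * (∫ ω : Ω × Ω, DCovAux.nrm α (V ω.1 - V ω.2) ∂(ℙ.prod ℙ))) := by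
    calc ∫⁻ s : Fin k → ℝ, ∫⁻ t : Fin k → ℝ, ((∫⁻ w : Ω × Ω, ENNReal.ofReal (1 - Real.cos (∑ j, s j * (U w.1 j - U w.2 j))) ∂(ℙ.prod ℙ)) * (∫⁻ w : Ω × Ω, ENNReal.ofReal (1 - Real.cos (∑ j, t j * (V w.1 j - V w.2 j))) ∂(ℙ.prod ℙ))) * ENNReal.ofReal (DCovAux.gk k c α s * DCovAux.gk k c α t)
        = ∫⁻ s : Fin k → ℝ, ∫⁻ t : Fin k → ℝ,
            ((∫⁻ w : Ω × Ω, ENNReal.ofReal (1 - Real.cos (∑ j, s j * (U w.1 j - U w.2 j))) ∂(ℙ.prod ℙ)) * ENNReal.ofReal (DCovAux.gk k c α s))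
              * ((∫⁻ w : Ω × Ω, ENNReal.ofReal (1 - Real.cos (∑ j, t j * (V w.1 j - V w.2 j))) ∂(ℙ.prod ℙ)) * ENNReal.ofReal (DCovAux.gk k c α t)) :=
          lintegral_congr fun s => lintegral_congr fun t => by
            rw [ENNReal.ofReal_mul (DCovAux.gk_nonneg hc.le α s), mul_mul_mul_comm]
      _ = ∫⁻ s : Fin k → ℝ, ((∫⁻ w : Ω × Ω, ENNReal.ofReal (1 - Real.cos (∑ j, s j * (U w.1 j - U w.2 j))) ∂(ℙ.prod ℙ)) * ENNReal.ofReal (DCovAux.gk k c α s))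
            * ∫⁻ t : Fin k → ℝ, ((∫⁻ w : Ω × Ω, ENNReal.ofReal (1 - Real.cos (∑ j, t j * (V w.1 j - V w.2 j))) ∂(ℙ.prod ℙ)) * ENNReal.ofReal (DCovAux.gk k c α t)) :=
          lintegral_congr fun s => lintegral_const_mul' _ _
            (ENNReal.mul_ne_top (hGUfin s) ENNReal.ofReal_ne_top)
      _ = ∫⁻ s : Fin k → ℝ, ((∫⁻ w : Ω × Ω, ENNReal.ofReal (1 - Real.cos (∑ j, s j * (U w.1 j - U w.2 j))) ∂(ℙ.prod ℙ)) * ENNReal.ofReal (DCovAux.gk k c α s)) * ENNReal.ofReal (∫ ω : Ω × Ω, DCovAux.nrm α (V ω.1 - V ω.2) ∂(ℙ.prod ℙ)) := by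
          rw [hJV]
      _ = (∫⁻ s : Fin k → ℝ, (∫⁻ w : Ω × Ω, ENNReal.ofReal (1 - Real.cos (∑ j, s j * (U w.1 j - U w.2 j))) ∂(ℙ.prod ℙ)) * ENNReal.ofReal (DCovAux.gk k c α s)) * ENNReal.ofReal (∫ ω : Ω × Ω, DCovAux.nrm α (V ω.1 - V ω.2) ∂(ℙ.prod ℙ)) :=
          lintegral_mul_const' _ _ ENNReal.ofReal_ne_top
      _ = ENNReal.ofReal (∫ ω : Ω × Ω, DCovAux.nrm α (U ω.1 - U ω.2) ∂(ℙ.prod ℙ)) * ENNReal.ofReal (∫ ω : Ω × Ω, DCovAux.nrm α (V ω.1 - V ω.2) ∂(ℙ.prod ℙ)) := by rw [hJU]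
      _ = ENNReal.ofReal ((∫ ω : Ω × Ω, DCovAux.nrm α (U ω.1 - U ω.2) ∂(ℙ.prod ℙ)) * (∫ ω : Ω × Ω, DCovAux.nrm α (V ω.1 - V ω.2) ∂(ℙ.prod ℙ))) :=
          (ENNReal.ofReal_mul (integral_nonneg fun ω => DCovAux.nrm_nonneg _ _)).symm
  -- the master identity (times two)
  have main2 : 2 * (∫⁻ s : Fin k → ℝ, ∫⁻ t : Fin k → ℝ, ENNReal.ofReal (‖(∫ ω, Complex.exp (Complex.I * ((∑ j, (s j * U ω j + t j * V ω j) : ℝ) : ℂ)) ∂ℙ) - (∫ ω, Complex.exp (Complex.I * ((∑ j, s j * U ω j : ℝ) : ℂ)) ∂ℙ) * (∫ ω, Complex.exp (Complex.I * ((∑ j, t j * V ω j : ℝ) : ℂ)) ∂ℙ)‖ ^ 2 * (DCovAux.gk k c α s * DCovAux.gk k c α t))) + 4 * ENNReal.ofReal (∫ ω : Ω × Ω × Ω, DCovAux.nrm α (U ω.1 - U ω.2.1) * DCovAux.nrm α (V ω.1 - V ω.2.2) ∂(ℙ.prod (ℙ.prod ℙ)))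
      = 2 * ENNReal.ofReal (∫ ω : Ω × Ω, DCovAux.nrm α (U ω.1 - U ω.2) * DCovAux.nrm α (V ω.1 - V ω.2) ∂(ℙ.prod ℙ)) + 2 * ENNReal.ofReal ((∫ ω : Ω × Ω, DCovAux.nrm α (U ω.1 - U ω.2) ∂(ℙ.prod ℙ)) * (∫ ω : Ω × Ω, DCovAux.nrm α (V ω.1 - V ω.2) ∂(ℙ.prod ℙ))) := by
    calc 2 * (∫⁻ s : Fin k → ℝ, ∫⁻ t : Fin k → ℝ, ENNReal.ofReal (‖(∫ ω, Complex.exp (Complex.I * ((∑ j, (s j * U ω j + t j * V ω j) : ℝ) : ℂ)) ∂ℙ) - (∫ ω, Complex.exp (Complex.I * ((∑ j, s j * U ω j : ℝ) : ℂ)) ∂ℙ) * (∫ ω, Complex.exp (Complex.I * ((∑ j, t j * V ω j : ℝ) : ℂ)) ∂ℙ)‖ ^ 2 * (DCovAux.gk k c α s * DCovAux.gk k c α t))) + 4 * ENNReal.ofReal (∫ ω : Ω × Ω × Ω, DCovAux.nrm α (U ω.1 - U ω.2.1) * DCovAux.nrm α (V ω.1 - V ω.2.2) ∂(ℙ.prod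 (ℙ.prod ℙ)))
        = (∫⁻ s : Fin k → ℝ, ∫⁻ t : Fin k → ℝ, (ENNReal.ofReal (‖(∫ ω, Complex.exp (Complex.I * ((∑ j, (s j * U ω j + t j * V ω j) : ℝ) : ℂ)) ∂ℙ) - (∫ ω, Complex.exp (Complex.I * ((∑ j, s j * U ω j : ℝ) : ℂ)) ∂ℙ) * (∫ ω, Complex.exp (Complex.I * ((∑ j, t j * V ω j : ℝ) : ℂ)) ∂ℙ)‖ ^ 2 * (DCovAux.gk k c α s * DCovAux.gk k c α t)) + ENNReal.ofReal (‖(∫ ω, Complex.exp (Complex.I * ((∑ j, (s j * U ω j + (-t) j * V ω j) : ℝ) : ℂ)) ∂ℙ) - (∫ ω, Complex.exp (Complex.I * ((∑ j, s j * U ω j : ℝ) : ℂ)) ∂ℙ) * (∫ ω, Complex.exp (Complex.I * ((∑ j, (-t) j * V ω j : ℝ) : ℂ)) ∂ℙ)‖ ^ 2 * (DCovAux.gk k c α s * DCovAux.gk k c α (-t)))))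
            + ∫⁻ s : Fin k → ℝ, ∫⁻ t : Fin k → ℝ, 4 * ((∫⁻ w : Ω × Ω × Ω, ENNReal.ofReal ((1 - Real.cos (∑ j, s j * (U w.1 j - U w.2.1 j))) * (1 - Real.cos (∑ j, t j * (V w.1 j - V w.2.2 j)))) ∂(ℙ.prod (ℙ.prod ℙ))) * ENNReal.ofReal (DCovAux.gk k c α s * DCovAux.gk k c α t)) := by
          rw [hsym, ← hJ3, DCovAux.lintegral2_const_mul 4 (by norm_num)]
      _ = ∫⁻ s : Fin k → ℝ, ∫⁻ t : Fin k → ℝ,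
            ((ENNReal.ofReal (‖(∫ ω, Complex.exp (Complex.I * ((∑ j, (s j * U ω j + t j * V ω j) : ℝ) : ℂ)) ∂ℙ) - (∫ ω, Complex.exp (Complex.I * ((∑ j, s j * U ω j : ℝ) : ℂ)) ∂ℙ) * (∫ ω, Complex.exp (Complex.I * ((∑ j, t j * V ω j : ℝ) : ℂ)) ∂ℙ)‖ ^ 2 * (DCovAux.gk k c α s * DCovAux.gk k c α t)) + ENNReal.ofReal (‖(∫ ω, Complex.exp (Complex.I * ((∑ j, (s j * U ω j + (-t) j * V ω j) : ℝ) : ℂ)) ∂ℙ) - (∫ ω, Complex.exp (Complex.I * ((∑ j, s j * U ω j : ℝ) : ℂ)) ∂ℙ) * (∫ ω, Complex.exp (Complex.I * ((∑ j, (-t) j * V ω j : ℝ) : ℂ)) ∂ℙ)‖ ^ 2 * (DCovAux.gk k c α s * DCovAux.gk k c α (-t))))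
              + 4 * ((∫⁻ w : Ω × Ω × Ω, ENNReal.ofReal ((1 - Real.cos (∑ j, s j * (U w.1 j - U w.2.1 j))) * (1 - Real.cos (∑ j, t j * (V w.1 j - V w.2.2 j)))) ∂(ℙ.prod (ℙ.prod ℙ))) * ENNReal.ofReal (DCovAux.gk k c α s * DCovAux.gk k c α t))) :=
          (DCovAux.lintegral2_add (G := fun s t => 4 * ((∫⁻ w : Ω × Ω × Ω, ENNReal.ofReal ((1 - Real.cos (∑ j, s j * (U w.1 j - U w.2.1 j))) * (1 - Real.cos (∑ j, t j * (V w.1 j - V w.2.2 j)))) ∂(ℙ.prod (ℙ.prod ℙ))) * ENNReal.ofReal (DCovAux.gk k c α s * DCovAux.gk k c α t))) _ (mG3.const_mul 4)).symm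
      _ = ∫⁻ s : Fin k → ℝ, ∫⁻ t : Fin k → ℝ,
            (2 * ((∫⁻ w : Ω × Ω, ENNReal.ofReal ((1 - Real.cos (∑ j, s j * (U w.1 j - U w.2 j))) * (1 - Real.cos (∑ j, t j * (V w.1 j - V w.2 j)))) ∂(ℙ.prod ℙ)) * ENNReal.ofReal (DCovAux.gk k c α s * DCovAux.gk k c α t))
              + 2 * (((∫⁻ w : Ω × Ω, ENNReal.ofReal (1 - Real.cos (∑ j, s j * (U w.1 j - U w.2 j))) ∂(ℙ.prod ℙ)) * (∫⁻ w : Ω × Ω, ENNReal.ofReal (1 - Real.cos (∑ j, t j * (V w.1 j - V w.2 j))) ∂(ℙ.prod ℙ))) * ENNReal.ofReal (DCovAux.gk k c α s * DCovAux.gk k c α t))) :=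
          lintegral_congr fun s => lintegral_congr fun t => pk s t
      _ = (∫⁻ s : Fin k → ℝ, ∫⁻ t : Fin k → ℝ, 2 * ((∫⁻ w : Ω × Ω, ENNReal.ofReal ((1 - Real.cos (∑ j, s j * (U w.1 j - U w.2 j))) * (1 - Real.cos (∑ j, t j * (V w.1 j - V w.2 j)))) ∂(ℙ.prod ℙ)) * ENNReal.ofReal (DCovAux.gk k c α s * DCovAux.gk k c α t)))
            + ∫⁻ s : Fin k → ℝ, ∫⁻ t : Fin k → ℝ,
                2 * (((∫⁻ w : Ω × Ω, ENNReal.ofReal (1 - Real.cos (∑ j, s j * (U w.1 j - U w.2 j))) ∂(ℙ.prod ℙ)) * (∫⁻ w : Ω × Ω, ENNReal.ofReal (1 - Real.cos (∑ j, t j * (V w.1 j - V w.2 j))) ∂(ℙ.prod ℙ))) * ENNReal.ofReal (DCovAux.gk k c α s * DCovAux.gk k c α t)) :=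
          DCovAux.lintegral2_add (G := fun s t => 2 * (((∫⁻ w : Ω × Ω, ENNReal.ofReal (1 - Real.cos (∑ j, s j * (U w.1 j - U w.2 j))) ∂(ℙ.prod ℙ)) * (∫⁻ w : Ω × Ω, ENNReal.ofReal (1 - Real.cos (∑ j, t j * (V w.1 j - V w.2 j))) ∂(ℙ.prod ℙ))) * ENNReal.ofReal (DCovAux.gk k c α s * DCovAux.gk k c α t))) _ (mG2.const_mul 2)
      _ = 2 * ENNReal.ofReal (∫ ω : Ω × Ω, DCovAux.nrm α (U ω.1 - U ω.2) * DCovAux.nrm α (V ω.1 - V ω.2) ∂(ℙ.prod ℙ)) + 2 * ENNReal.ofReal ((∫ ω : Ω × Ω, DCovAux.nrm α (U ω.1 - U ω.2) ∂(ℙ.prod ℙ)) * (∫ ω : Ω × Ω, DCovAux.nrm α (V ω.1 - V ω.2) ∂(ℙ.prod ℙ))) := by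
          rw [DCovAux.lintegral2_const_mul 2 (by norm_num),
            DCovAux.lintegral2_const_mul 2 (by norm_num), hJ1, hJ2]
  have he3nn : (0:ℝ) ≤ (∫ ω : Ω × Ω × Ω, DCovAux.nrm α (U ω.1 - U ω.2.1) * DCovAux.nrm α (V ω.1 - V ω.2.2) ∂(ℙ.prod (ℙ.prod ℙ))) :=
    integral_nonneg fun ω => mul_nonneg (DCovAux.nrm_nonneg _ _) (DCovAux.nrm_nonneg _ _)
  have he1nn : (0:ℝ) ≤ (∫ ω : Ω × Ω, DCovAux.nrm α (U ω.1 - U ω.2) * DCovAux.nrm α (V ω.1 - V ω.2) ∂(ℙ.prod ℙ)) :=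
    integral_nonneg fun ω => mul_nonneg (DCovAux.nrm_nonneg _ _) (DCovAux.nrm_nonneg _ _)
  have heUVnn : (0:ℝ) ≤ (∫ ω : Ω × Ω, DCovAux.nrm α (U ω.1 - U ω.2) ∂(ℙ.prod ℙ)) * (∫ ω : Ω × Ω, DCovAux.nrm α (V ω.1 - V ω.2) ∂(ℙ.prod ℙ)) :=
    mul_nonneg (integral_nonneg fun ω => DCovAux.nrm_nonneg _ _)
      (integral_nonneg fun ω => DCovAux.nrm_nonneg _ _)
  have cancel2 : (∫⁻ s : Fin k → ℝ, ∫⁻ t : Fin k → ℝ, ENNReal.ofReal (‖(∫ ω, Complex.exp (Complex.I * ((∑ j, (s j * U ω j + t j * V ω j) : ℝ) : ℂ)) ∂ℙ) - (∫ ω, Complex.exp (Complex.I * ((∑ j, s j * U ω j : ℝ) : ℂ)) ∂ℙ) * (∫ ω, Complex.exp (Complex.I * ((∑ j, t j * V ω j : ℝ) : ℂ)) ∂ℙ)‖ ^ 2 * (DCovAux.gk k c α s * DCovAux.gk k c α t))) + 2 * ENNReal.ofReal (∫ ω : Ω × Ω × Ω, DCovAux.nrm α (U ω.1 - U ω.2.1)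 * DCovAux.nrm α (V ω.1 - V ω.2.2) ∂(ℙ.prod (ℙ.prod ℙ)))
      = ENNReal.ofReal (∫ ω : Ω × Ω, DCovAux.nrm α (U ω.1 - U ω.2) * DCovAux.nrm α (V ω.1 - V ω.2) ∂(ℙ.prod ℙ)) + ENNReal.ofReal ((∫ ω : Ω × Ω, DCovAux.nrm α (U ω.1 - U ω.2) ∂(ℙ.prod ℙ)) * (∫ ω : Ω × Ω, DCovAux.nrm α (V ω.1 - V ω.2) ∂(ℙ.prod ℙ))) := by
    have h2 : 2 * ((∫⁻ s : Fin k → ℝ, ∫⁻ t : Fin k → ℝ, ENNReal.ofReal (‖(∫ ω, Complex.exp (Complex.I * ((∑ j, (s j * U ω j + t j * V ω j) : ℝ) : ℂ)) ∂ℙ) - (∫ ω, Complex.exp (Complex.I * ((∑ j, s j * U ω j : ℝ) : ℂ)) ∂ℙ) * (∫ ω, Complex.exp (Complex.I * ((∑ j, t j * V ω j : ℝ) : ℂ)) ∂ℙ)‖ ^ 2 * (DCovAux.gk k c α s * DCovAux.gk k c α t))) + 2 * ENNReal.ofReal (∫ ω : Ω × Ω × Ω, DCovAux.nrm α (U ω.1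 - U ω.2.1) * DCovAux.nrm α (V ω.1 - V ω.2.2) ∂(ℙ.prod (ℙ.prod ℙ))))
        = 2 * (ENNReal.ofReal (∫ ω : Ω × Ω, DCovAux.nrm α (U ω.1 - U ω.2) * DCovAux.nrm α (V ω.1 - V ω.2) ∂(ℙ.prod ℙ)) + ENNReal.ofReal ((∫ ω : Ω × Ω, DCovAux.nrm α (U ω.1 - U ω.2) ∂(ℙ.prod ℙ)) * (∫ ω : Ω × Ω, DCovAux.nrm α (V ω.1 - V ω.2) ∂(ℙ.prod ℙ)))) := by
      calc 2 * ((∫⁻ s : Fin k → ℝ, ∫⁻ t : Fin k → ℝ, ENNReal.ofReal (‖(∫ ω, Complex.exp (Complex.I * ((∑ j, (s j * U ω j + t j * V ω j) : ℝ) : ℂ)) ∂ℙ) - (∫ ω, Complex.exp (Complex.I * ((∑ j, s j * U ω j : ℝ) : ℂ)) ∂ℙ) * (∫ ω, Complex.exp (Complex.I * ((∑ j, t j * V ω j : ℝ) : ℂ)) ∂ℙ)‖ ^ 2 * (DCovAux.gk k c α s * DCovAux.gk k c α t))) + 2 * ENNReal.ofReal (∫ ω : Ω × Ω × Ω, DCovAux.nrm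 α (U ω.1 - U ω.2.1) * DCovAux.nrm α (V ω.1 - V ω.2.2) ∂(ℙ.prod (ℙ.prod ℙ))))
          = 2 * (∫⁻ s : Fin k → ℝ, ∫⁻ t : Fin k → ℝ, ENNReal.ofReal (‖(∫ ω, Complex.exp (Complex.I * ((∑ j, (s j * U ω j + t j * V ω j) : ℝ) : ℂ)) ∂ℙ) - (∫ ω, Complex.exp (Complex.I * ((∑ j, s j * U ω j : ℝ) : ℂ)) ∂ℙ) * (∫ ω, Complex.exp (Complex.I * ((∑ j, t j * V ω j : ℝ) : ℂ)) ∂ℙ)‖ ^ 2 * (DCovAux.gk k c α s * DCovAux.gk k c α t))) + 4 * ENNReal.ofReal (∫ ω : Ω × Ω × Ω, DCovAux.nrm α (U ω.1 - U ω.2.1) * DCovAux.nrm α (V ω.1 - V ω.2.2) ∂(ℙ.prod (ℙ.prod ℙ))) := by ring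
        _ = 2 * ENNReal.ofReal (∫ ω : Ω × Ω, DCovAux.nrm α (U ω.1 - U ω.2) * DCovAux.nrm α (V ω.1 - V ω.2) ∂(ℙ.prod ℙ)) + 2 * ENNReal.ofReal ((∫ ω : Ω × Ω, DCovAux.nrm α (U ω.1 - U ω.2) ∂(ℙ.prod ℙ)) * (∫ ω : Ω × Ω, DCovAux.nrm α (V ω.1 - V ω.2) ∂(ℙ.prod ℙ))) := main2
        _ = 2 * (ENNReal.ofReal (∫ ω : Ω × Ω, DCovAux.nrm α (U ω.1 - U ω.2) * DCovAux.nrm α (V ω.1 - V ω.2) ∂(ℙ.prod ℙ)) + ENNReal.ofReal ((∫ ω : Ω × Ω, DCovAux.nrm α (U ω.1 - U ω.2) ∂(ℙ.prod ℙ)) * (∫ ω : Ω × Ω, DCovAux.nrm α (V ω.1 - V ω.2) ∂(ℙ.prod ℙ)))) := by ring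
    exact (ENNReal.mul_right_inj (by norm_num) (by norm_num)).mp h2
  have hfin : (2 : ℝ≥0∞) * ENNReal.ofReal (∫ ω : Ω × Ω × Ω, DCovAux.nrm α (U ω.1 - U ω.2.1) * DCovAux.nrm α (V ω.1 - V ω.2.2) ∂(ℙ.prod (ℙ.prod ℙ))) ≠ ⊤ :=
    ENNReal.mul_ne_top (by norm_num) ENNReal.ofReal_ne_top
  have hL := ENNReal.eq_sub_of_add_eq hfin cancel2
  rw [hL, show ENNReal.ofReal (∫ ω : Ω × Ω, DCovAux.nrm α (U ω.1 - U ω.2) * DCovAux.nrm α (V ω.1 - V ω.2) ∂(ℙ.prod ℙ)) + ENNReal.ofReal ((∫ ω : Ω × Ω, DCovAux.nrm α (U ω.1 - U ω.2) ∂(ℙ.prod ℙ)) * (∫ ω : Ω × Ω, DCovAux.nrm α (V ω.1 - V ω.2) ∂(ℙ.prod ℙ)))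
      = ENNReal.ofReal ((∫ ω : Ω × Ω, DCovAux.nrm α (U ω.1 - U ω.2) * DCovAux.nrm α (V ω.1 - V ω.2) ∂(ℙ.prod ℙ)) + (∫ ω : Ω × Ω, DCovAux.nrm α (U ω.1 - U ω.2) ∂(ℙ.prod ℙ)) * (∫ ω : Ω × Ω, DCovAux.nrm α (V ω.1 - V ω.2) ∂(ℙ.prod ℙ))) from (ENNReal.ofReal_add he1nn heUVnn).symm,
    show (2 : ℝ≥0∞) * ENNReal.ofReal (∫ ω : Ω × Ω × Ω, DCovAux.nrm α (U ω.1 - U ω.2.1) * DCovAux.nrm α (V ω.1 - V ω.2.2) ∂(ℙ.prod (ℙ.prod ℙ))) = ENNReal.ofReal (2 * (∫ ω : Ω × Ω × Ω, DCovAux.nrm α (U ω.1 - U ω.2.1) * DCovAux.nrm α (V ω.1 - V ω.2.2) ∂(ℙ.prod (ℙ.prod ℙ)))) from by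
      rw [ENNReal.ofReal_mul (by norm_num : (0:ℝ) ≤ 2)]; norm_num]
  exact (ENNReal.ofReal_sub _ (by linarith)).symm
end
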